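/- arXiv:cs/0609040 — 11 statements merged into one kernel-verified Lean document; each statement's English description precedes it below -/
import Mathlib

section
/- In a completely iterative algebra, the assignment of unique solutions is compositional: for flat equation morphisms e : X → HX + Y and f : Y → HY + A, one has (f† ▹ e)† = (f ⊞ e)† ∘ inl, where f† ▹ e = (id_{HX} + f†) ∘ e and f ⊞ e = (can + id_A) ∘ (id_{HX} + f) ∘ [e, inr] with can = [H inl, H inr] : HX + HY → H(X+Y). -/
open CategoryTheory Limits

universe u v

variable {C : Type u} [Category.{v} C] [HasBinaryCoproducts C]

/-- `s` is a solution of the flat equation morphism `e : X ⟶ HX + A`. -/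
def IsSolution (H : C ⥤ C) {A X : C} (α : H.obj A ⟶ A) (e : X ⟶ H.obj X ⨿ A) (s : X ⟶ A) : Prop :=
  s = e ≫ coprod.map (H.map s) (𝟙 A) ≫ coprod.desc α (𝟙 A)

/-- `h ▹ e = (id_{HX} + h) ∘ e` : renaming of parameters. -/
noncomputable def afterEq (H : C ⥤ C) {X Y Z : C} (e : X ⟶ H.obj X ⨿ Y) (h : Y ⟶ Z) :
    X ⟶ H.obj X ⨿ Z :=
  e ≫ coprod.map (𝟙 (H.obj X)) h

/-- `f ⊞ e = (can + id_A) ∘ (id_{HX} + f) ∘ [e, inr]`, with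
`can = [H inl, H inr] : HX + HY ⟶ H(X+Y)`. -/
noncomputable def plusEq (H : C ⥤ C) {X Y A : C} (e : X ⟶ H.obj X ⨿ Y) (f : Y ⟶ H.obj Y ⨿ A) :
    X ⨿ Y ⟶ H.obj (X ⨿ Y) ⨿ A :=
  coprod.desc e coprod.inr ≫
    coprod.map (𝟙 (H.obj X)) f ≫
      (coprod.associator (H.obj X) (H.obj Y) A).inv ≫
        coprod.map (coprod.desc (H.map coprod.inl) (H.map coprod.inr)) (𝟙 A)

/-- In a completely iterative algebra, the assignment of unique solutions is compositional:
`(f† ▹ e)† = (f ⊞ e)† ∘ inl`. -/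
theorem cia_solution_compositional
    (H : C ⥤ C) {A : C} (α : H.obj A ⟶ A)
    (cia : ∀ (X : C) (e : X ⟶ H.obj X ⨿ A), ∃! s : X ⟶ A, IsSolution H α e s)
    {X Y : C} (e : X ⟶ H.obj X ⨿ Y) (f : Y ⟶ H.obj Y ⨿ A)
    (fs : Y ⟶ A) (hfs : IsSolution H α f fs)
    (s₁ : X ⟶ A) (hs₁ : IsSolution H α (afterEq H e fs) s₁)
    (s₂ : X ⨿ Y ⟶ A) (hs₂ : IsSolution H α (plusEq H e f) s₂) :
    s₁ = coprod.inl ≫ s₂ := by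
  have hf2 : IsSolution H α f (coprod.inr ≫ s₂) := by
    unfold IsSolution at hs₂ ⊢
    conv_lhs => rw [hs₂]
    simp [plusEq]
    erw [coprod.inr_desc, coprod.inr_desc]
    erw [coprod.inr_desc, coprod.inr_desc, coprod.inl_desc]
  have hfe : IsSolution H α (afterEq H e fs) (coprod.inl ≫ s₂) := by
    obtain ⟨sf, hsf, huf⟩ := cia Y f
    have hfsr : fs = coprod.inr ≫ s₂ := (huf fs hfs).trans (huf _ hf2).symm
    unfold IsSolution at hs₂ hfs ⊢
    conv_lhs => rw [hs₂]
    simp [plusEq, afterEq, hfsr]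
    have hf2' : coprod.inr ≫ s₂ = f ≫ coprod.desc (H.map coprod.inr ≫ H.map s₂ ≫ α) (𝟙 A) := by
      conv_lhs => rw [hf2]
      simp [IsSolution, Functor.map_comp]
    erw [coprod.inl_desc, coprod.inl_desc, coprod.inl_desc, coprod.inr_desc, coprod.inr_desc]
    rw [← hf2']
  obtain ⟨s, hs, hu⟩ := cia X (afterEq H e fs)
  exact (hu s₁ hs₁).trans (hu _ hfe).symm
end

section
/- In a completely iterative algebra with compositional and functorial solutions, for flat equation morphisms e : X → HX + Y and f : Y → HY + A the solution of the combined system satisfies (f ⊞ e)† = [(f† ▹ e)†, f†] : X + Y → A. -/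
open CategoryTheory Limits

universe u v

variable {C : Type u} [Category.{v} C] [HasBinaryCoproducts C]

/-- In a completely iterative algebra (whose unique solutions are functorial and
compositional), `(f ⊞ e)† = [(f† ▹ e)†, f†] : X + Y ⟶ A`. -/
theorem cia_solution_plus_desc
    (H : C ⥤ C) {A : C} (α : H.obj A ⟶ A)
    (cia : ∀ (X : C) (e : X ⟶ H.obj X ⨿ A), ∃! s : X ⟶ A, IsSolution H α e s)
    {X Y : C} (e : X ⟶ H.obj X ⨿ Y) (f : Y ⟶ H.obj Y ⨿ A)
    (fs : Y ⟶ A) (hfs : IsSolution H α f fs)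
    (s₁ : X ⟶ A) (hs₁ : IsSolution H α (afterEq H e fs) s₁)
    (s₂ : X ⨿ Y ⟶ A) (hs₂ : IsSolution H α (plusEq H e f) s₂) :
    s₂ = coprod.desc s₁ fs := by
  have comp : coprod.map (𝟙 (H.obj X)) fs ≫ coprod.map (H.map s₁) (𝟙 A) ≫
      coprod.desc α (𝟙 A) = coprod.desc (H.map s₁ ≫ α) fs := by
    apply coprod.hom_ext <;> simp
  have h1 : s₁ = e ≫ coprod.desc (H.map s₁ ≫ α) fs := by
    have hs₁' := hs₁
    unfold IsSolution afterEq at hs₁'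
    rw [Category.assoc, comp] at hs₁'
    exact hs₁'
  have tail : coprod.map (𝟙 (H.obj X)) f ≫
      (coprod.associator (H.obj X) (H.obj Y) A).inv ≫
      coprod.map (coprod.desc (H.map coprod.inl) (H.map coprod.inr)) (𝟙 A) ≫
      coprod.map (H.map (coprod.desc s₁ fs)) (𝟙 A) ≫ coprod.desc α (𝟙 A) =
      coprod.desc (H.map s₁ ≫ α) fs := by
    apply coprod.hom_ext
    · simp only [coprod.inl_desc, coprod.map_map, Category.comp_id, Category.id_comp,
        coprod.inl_map, coprod.associator_inv, coprod.inl_desc_assoc, Category.assoc,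
        coprod.inl_map_assoc]
      rw [← Category.assoc, ← H.map_comp]
      simp
      rw [← Functor.map_comp_assoc, coprod.inl_desc]
    · simp only [coprod.inr_desc, coprod.inr_map_assoc, coprod.associator_inv,
        coprod.inr_desc_assoc, Category.assoc, coprod.map_map, Category.comp_id,
        Category.id_comp, coprod.inl_map_assoc, coprod.inr_map, coprod.map_desc]
      simp only [Category.assoc, coprod.desc_comp, coprod.inl_desc, coprod.inr_desc,
        Category.comp_id, coprod.inr_desc_assoc]
      simp only [← Functor.map_comp_assoc, coprod.inr_desc]
      conv_rhs => rw [hfs]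
      simp [coprod.map_desc]
  have key : IsSolution H α (plusEq H e f) (coprod.desc s₁ fs) := by
    unfold IsSolution plusEq
    apply coprod.hom_ext
    · simp only [coprod.inl_desc, coprod.inl_desc_assoc, Category.assoc]
      rw [tail, ← h1]
    · simp only [coprod.inr_desc, coprod.inr_desc_assoc, Category.assoc]
      rw [tail]
      exact (coprod.inr_desc _ _).symm
  exact ((cia _ (plusEq H e f)).unique hs₂ key)
end

section
/- Let H : CMS → CMS be a contracting endofunctor of the category of complete metric spaces (with metrics bounded by 1) and nonexpanding maps, i.e., there is ε < 1 with d(Hf, Hg) ≤ ε · d(f, g) for all parallel pairs f, g in the sup metric. Then every nonempty H-algebra α : HA → A is a completely iterative algebra: every flat equation morphism e : X → HX + A has a unique solution. -/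
open scoped NNReal

/-- An object of the category `CMS` of complete metric spaces with metrics
bounded by `1`, and nonexpanding maps. -/
structure CMSObj : Type 1 where
  carrier : Type
  [metric : MetricSpace carrier]
  [complete : CompleteSpace carrier]
  bounded : ∀ x y : carrier, dist x y ≤ 1

attribute [instance] CMSObj.metric CMSObj.complete

instance : CoeSort CMSObj Type := ⟨CMSObj.carrier⟩

/-- A morphism of `CMS`: a nonexpanding (`1`-Lipschitz) map. -/
def CMSHom (X Y : CMSObj) : Type := {f : X.carrier → Y.carrier // LipschitzWith 1 f}

/-- Identity morphism of `CMS`. -/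
def CMSHom.id (X : CMSObj) : CMSHom X X := ⟨fun x => x, LipschitzWith.id⟩

/-- Composition of morphisms of `CMS`. -/
def CMSHom.comp {X Y Z : CMSObj} (g : CMSHom Y Z) (f : CMSHom X Y) : CMSHom X Z :=
  ⟨g.1 ∘ f.1, by simpa using g.2.comp f.2⟩

/-- The sup (pointwise) metric on the hom-set `CMS(X, Y)`:
`d(f, g) = sup_x d(f x, g x)`. -/
noncomputable def homDist {X Y : CMSObj} (f g : CMSHom X Y) : ℝ :=
  ⨆ x : X.carrier, dist (f.1 x) (g.1 x)

/-- The carrier of the coproduct `X + Y` in `CMS` (a type synonym for the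
disjoint union). -/
def SumCarrier (X Y : CMSObj) : Type := X.carrier ⊕ Y.carrier

/-- The distance on the coproduct `X + Y` in `CMS`: within each summand the
given distances, across the summands the distance is `1`. -/
def sumDist (X Y : CMSObj) : SumCarrier X Y → SumCarrier X Y → ℝ
  | .inl a, .inl b => dist a b
  | .inr a, .inr b => dist a b
  | _, _ => 1

/-- The metric of the coproduct `X + Y` in `CMS`. -/
noncomputable def sumMetric (X Y : CMSObj) : MetricSpace (SumCarrier X Y) where
  dist := sumDist X Y
  dist_self := by rintro (a | a) <;> simp [sumDist]
  dist_comm := by rintro (a | a) (b | b) <;> simp [sumDist, dist_comm]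
  dist_triangle := by
    rintro (a | a) (b | b) (c | c) <;> simp only [sumDist]
    · exact dist_triangle a b c
    · linarith [dist_nonneg (x := a) (y := b)]
    · linarith [X.bounded a c]
    · linarith [dist_nonneg (x := b) (y := c)]
    · linarith [dist_nonneg (x := b) (y := c)]
    · linarith [Y.bounded a c]
    · linarith [dist_nonneg (x := a) (y := b)]
    · exact dist_triangle a b c
  eq_of_dist_eq_zero := by
    rintro (a | a) (b | b) h
    · simp only [sumDist] at h; exact congrArg Sum.inl (eq_of_dist_eq_zero h)
    · simp only [sumDist] at h; norm_num at h
    · simp only [sumDist] at h; norm_num at h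
    · simp only [sumDist] at h; exact congrArg Sum.inr (eq_of_dist_eq_zero h)

/-- Coproduct injections of `CMS`, as functions. -/
def sumInl (X Y : CMSObj) : X.carrier → SumCarrier X Y := Sum.inl

/-- Coproduct injections of `CMS`, as functions. -/
def sumInr (X Y : CMSObj) : Y.carrier → SumCarrier X Y := Sum.inr

theorem sumComplete (X Y : CMSObj) :
    @CompleteSpace _ (sumMetric X Y).toUniformSpace := by
  letI : MetricSpace (SumCarrier X Y) := sumMetric X Y
  have hisoL : Isometry (sumInl X Y) :=
    Isometry.of_dist_eq fun a b => rfl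
  have hisoR : Isometry (sumInr X Y) :=
    Isometry.of_dist_eq fun a b => rfl
  have hL : IsComplete (Set.range (sumInl X Y)) :=
    hisoL.isUniformInducing.isComplete_range
  have hR : IsComplete (Set.range (sumInr X Y)) :=
    hisoR.isUniformInducing.isComplete_range
  refine completeSpace_iff_isComplete_univ.mpr ?_
  have hu : (Set.range (sumInl X Y) ∪ Set.range (sumInr X Y)) = Set.univ := by
    ext z
    simp only [Set.mem_union, Set.mem_range, Set.mem_univ, iff_true]
    cases z with
    | inl a => exact Or.inl ⟨a, rfl⟩
    | inr b => exact Or.inr ⟨b, rfl⟩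
  rw [← hu]
  exact hL.union hR

/-- The coproduct `X + Y` in `CMS`. -/
noncomputable def CMSObj.sum (X Y : CMSObj) : CMSObj where
  carrier := SumCarrier X Y
  metric := sumMetric X Y
  complete := sumComplete X Y
  bounded := by
    rintro (a | a) (b | b)
    · exact X.bounded a b
    · exact le_refl 1
    · exact le_refl 1
    · exact Y.bounded a b

/-- An endofunctor of the category `CMS`. -/
structure CMSFunctor : Type 1 where
  obj : CMSObj → CMSObj
  map : ∀ {X Y : CMSObj}, CMSHom X Y → CMSHom (obj X) (obj Y)
  map_id : ∀ X : CMSObj, map (CMSHom.id X) = CMSHom.id (obj X)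
  map_comp : ∀ {X Y Z : CMSObj} (f : CMSHom X Y) (g : CMSHom Y Z),
    map (g.comp f) = (map g).comp (map f)

/-- `H` is `ε`-contracting: `d(Hf, Hg) ≤ ε·d(f, g)` in the sup metric, for all
parallel pairs `f, g`. -/
def CMSFunctor.Contracting (H : CMSFunctor) (ε : ℝ) : Prop :=
  ∀ (X Y : CMSObj) (f g : CMSHom X Y), homDist (H.map f) (H.map g) ≤ ε * homDist f g

/-- `s` is a solution of the flat equation morphism `e : X ⟶ HX + A` in the
`H`-algebra `(A, α)`: `s = [α, id] ∘ (Hs + id) ∘ e`. -/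
def CMSSol (H : CMSFunctor) {A : CMSObj} (α : CMSHom (H.obj A) A) {X : CMSObj}
    (e : CMSHom X (CMSObj.sum (H.obj X) A)) (s : CMSHom X A) : Prop :=
  ∀ x, s.1 x = Sum.elim (fun h => α.1 ((H.map s).1 h)) (fun a => a) (e.1 x)

/-- Let `H : CMS → CMS` be a contracting endofunctor of the category of
complete metric spaces (with metrics bounded by `1`) and nonexpanding maps.
Then every nonempty `H`-algebra `α : HA → A` is a completely iterative algebra:
every flat equation morphism `e : X → HX + A` has a unique solution. -/
theorem cms_contracting_algebra_cia (H : CMSFunctor) (ε : ℝ) (hε : ε < 1)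
    (hcontr : H.Contracting ε)
    (A : CMSObj) (hA : Nonempty A.carrier) (α : CMSHom (H.obj A) A) :
    ∀ (X : CMSObj) (e : CMSHom X (CMSObj.sum (H.obj X) A)),
      ∃! s : CMSHom X A, CMSSol H α e s := by
  intro X e
  classical
  set ε' : ℝ≥0 := ε.toNNReal with hε'def
  have hεε' : ε ≤ (ε' : ℝ) := Real.le_coe_toNNReal ε
  have hε'1 : ε' < 1 := by
    rw [← NNReal.coe_lt_coe, NNReal.coe_one, hε'def, Real.coe_toNNReal']
    exact max_lt hε one_pos
  have hle : ∀ {W Z : CMSObj} (f g : CMSHom W Z) (w : W.carrier),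
      dist (f.1 w) (g.1 w) ≤ homDist f g := by
    intro W Z f g w
    exact le_ciSup (f := fun w => dist (f.1 w) (g.1 w))
      ⟨1, by rintro r ⟨w, rfl⟩; exact Z.bounded _ _⟩ w
  have hnonneg : ∀ {W Z : CMSObj} (f g : CMSHom W Z), 0 ≤ homDist f g :=
    fun f g => Real.iSup_nonneg fun w => dist_nonneg
  -- the Banach operator on CMSHom X A
  let Φh : CMSHom X A → CMSHom X A := fun s =>
    ⟨fun x => Sum.elim (fun h => α.1 ((H.map s).1 h)) (fun a => a) (e.1 x), by
      apply LipschitzWith.of_dist_le_mul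
      intro x y
      simp only [NNReal.coe_one, one_mul]
      have he : dist (e.1 x) (e.1 y) ≤ dist x y := by
        simpa using e.2.dist_le_mul x y
      refine le_trans ?_ he
      have key : ∀ u v : (CMSObj.sum (H.obj X) A).carrier,
          dist (Sum.elim (fun h => α.1 ((H.map s).1 h)) (fun a => a) u)
            (Sum.elim (fun h => α.1 ((H.map s).1 h)) (fun a => a) v) ≤ dist u v := by
        rintro (h1 | a1) (h2 | a2)
        · show dist (α.1 ((H.map s).1 h1)) (α.1 ((H.map s).1 h2)) ≤
            sumDist (H.obj X) A (.inl h1) (.inl h2)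
          simp only [sumDist]
          calc dist (α.1 ((H.map s).1 h1)) (α.1 ((H.map s).1 h2))
              ≤ dist ((H.map s).1 h1) ((H.map s).1 h2) := by simpa using α.2.dist_le_mul _ _
            _ ≤ dist h1 h2 := by simpa using (H.map s).2.dist_le_mul _ _
        · show _ ≤ sumDist (H.obj X) A (.inl h1) (.inr a2)
          simpa [sumDist] using A.bounded _ _
        · show _ ≤ sumDist (H.obj X) A (.inr a1) (.inl h2)
          simpa [sumDist] using A.bounded _ _
        · show dist a1 a2 ≤ sumDist (H.obj X) A (.inr a1) (.inr a2)
          simp [sumDist]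
      exact key _ _⟩
  have hΦcontr : ∀ (s t : CMSHom X A) (x : X.carrier),
      dist ((Φh s).1 x) ((Φh t).1 x) ≤ (ε' : ℝ) * homDist s t := by
    intro s t x
    show dist (Sum.elim _ _ (e.1 x)) (Sum.elim _ _ (e.1 x)) ≤ _
    cases h : e.1 x with
    | inl hh =>
      simp only [Sum.elim_inl]
      calc dist (α.1 ((H.map s).1 hh)) (α.1 ((H.map t).1 hh))
          ≤ dist ((H.map s).1 hh) ((H.map t).1 hh) := by simpa using α.2.dist_le_mul _ _
        _ ≤ homDist (H.map s) (H.map t) := hle _ _ _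
        _ ≤ ε * homDist s t := hcontr _ _ _ _
        _ ≤ (ε' : ℝ) * homDist s t := mul_le_mul_of_nonneg_right hεε' (hnonneg _ _)
    | inr a =>
      simp only [Sum.elim_inr, dist_self]
      exact mul_nonneg ε'.coe_nonneg (hnonneg _ _)
  -- the complete space of nonexpanding bounded continuous functions
  let toBCF : CMSHom X A → (BoundedContinuousFunction X.carrier A.carrier) := fun s =>
    ⟨⟨s.1, s.2.continuous⟩, 1, fun x y => A.bounded _ _⟩
  let L := {f : BoundedContinuousFunction X.carrier A.carrier // LipschitzWith 1 ⇑f}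
  have hclosed : IsClosed {f : BoundedContinuousFunction X.carrier A.carrier | LipschitzWith 1 ⇑f} := by
    have hs : {f : BoundedContinuousFunction X.carrier A.carrier | LipschitzWith 1 ⇑f} =
        ⋂ (x : X.carrier) (y : X.carrier), {f | dist (f x) (f y) ≤ dist x y} := by
      ext f
      simp only [Set.mem_setOf_eq, Set.mem_iInter]
      constructor
      · intro h x y; simpa using h.dist_le_mul x y
      · intro h
        apply LipschitzWith.of_dist_le_mul
        intro x y; simpa using h x y
    rw [hs]
    refine isClosed_iInter fun x => isClosed_iInter fun y => ?_
    exact isClosed_le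
      (Continuous.dist (continuous_eval_const x)
        (continuous_eval_const y)) continuous_const
  haveI : CompleteSpace L := hclosed.completeSpace_coe
  haveI : Nonempty L :=
    ⟨⟨BoundedContinuousFunction.const _ hA.some, LipschitzWith.weaken (LipschitzWith.const _) zero_le_one⟩⟩
  let fromBCF : L → CMSHom X A := fun f => ⟨⇑f.1, f.2⟩
  let Φ : L → L := fun f => ⟨toBCF (Φh (fromBCF f)), (Φh (fromBCF f)).2⟩
  have hhom_le : ∀ f g : L, homDist (fromBCF f) (fromBCF g) ≤ dist f g := by
    intro f g
    refine Real.iSup_le (fun x => ?_) dist_nonneg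
    rw [Subtype.dist_eq]
    exact BoundedContinuousFunction.dist_coe_le_dist x
  have hΦ : ContractingWith ε' Φ := by
    refine ⟨hε'1, LipschitzWith.of_dist_le_mul fun f g => ?_⟩
    rw [Subtype.dist_eq]
    rw [BoundedContinuousFunction.dist_le (mul_nonneg ε'.coe_nonneg dist_nonneg)]
    intro x
    exact (hΦcontr (fromBCF f) (fromBCF g) x).trans
      (mul_le_mul_of_nonneg_left (hhom_le f g) ε'.coe_nonneg)
  -- solutions correspond to fixed points
  have hsol_iff : ∀ f : L, CMSSol H α e (fromBCF f) ↔ Function.IsFixedPt Φ f := by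
    intro f
    constructor
    · intro hsol
      apply Subtype.ext
      apply BoundedContinuousFunction.ext
      intro x
      exact (hsol x).symm
    · intro hfix x
      have := congrArg (fun g : L => (g.1 : X.carrier → A.carrier) x) hfix
      exact this.symm
  refine ⟨fromBCF (ContractingWith.fixedPoint Φ hΦ), ?_, ?_⟩
  · exact (hsol_iff _).mpr hΦ.fixedPoint_isFixedPt
  · intro t ht
    have htL : (⟨toBCF t, t.2⟩ : L) = ContractingWith.fixedPoint Φ hΦ := by
      apply hΦ.fixedPoint_unique
      exact (hsol_iff ⟨toBCF t, t.2⟩).mp (by exact ht)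
    apply Subtype.ext
    exact congrArg (fun g : L => (g.1 : X.carrier → A.carrier)) htL
end

section
/- Let H : CMS → CMS be ε-contracting (ε < 1), A a nonempty H-algebra, and e : X → HX + A a flat equation morphism. Define e†₀ : X → A to be any nonexpanding map and e†_{n+1} = [α, id] ∘ (He†_n + id) ∘ e. Then (e†_n) is a Cauchy sequence in the sup metric and its limit is the unique solution of e. -/
open scoped NNReal

/-- Copairing `[f, g]` of nonexpanding maps on the coproduct. -/
noncomputable def cmsElim {X Y Z : CMSObj} (f : CMSHom X Z) (g : CMSHom Y Z) :
    CMSHom (CMSObj.sum X Y) Z :=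
  ⟨Sum.elim f.1 g.1, by
    apply LipschitzWith.of_dist_le_mul
    rintro (a | a) (b | b)
    · exact f.2.dist_le_mul a b
    · exact le_trans (Z.bounded (f.1 a) (g.1 b))
        (le_of_eq (by norm_num : (1 : ℝ) = ((1 : NNReal) : ℝ) * 1))
    · exact le_trans (Z.bounded (g.1 a) (f.1 b))
        (le_of_eq (by norm_num : (1 : ℝ) = ((1 : NNReal) : ℝ) * 1))
    · exact g.2.dist_le_mul a b⟩

/-- The map `F : s ↦ [α, id] ∘ (Hs + id) ∘ e` on `CMS(X, A)`. -/
noncomputable def cmsEqFun (H : CMSFunctor) {A : CMSObj} (α : CMSHom (H.obj A) A)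
    {X : CMSObj} (e : CMSHom X (CMSObj.sum (H.obj X) A)) (s : CMSHom X A) :
    CMSHom X A :=
  CMSHom.comp (cmsElim (CMSHom.comp α (H.map s)) (CMSHom.id A)) e

/-- The approximations `e†₀ = s₀`, `e†_{n+1} = [α, id] ∘ (H e†_n + id) ∘ e`. -/
noncomputable def cmsIter (H : CMSFunctor) {A : CMSObj} (α : CMSHom (H.obj A) A)
    {X : CMSObj} (e : CMSHom X (CMSObj.sum (H.obj X) A)) (s₀ : CMSHom X A) :
    ℕ → CMSHom X A
  | 0 => s₀
  | n + 1 => cmsEqFun H α e (cmsIter H α e s₀ n)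

section Aux

lemma homDist_nonneg {X Y : CMSObj} (f g : CMSHom X Y) : 0 ≤ homDist f g :=
  Real.iSup_nonneg fun _ => dist_nonneg

lemma homDist_le {X Y : CMSObj} (f g : CMSHom X Y) {a : ℝ} (ha : 0 ≤ a)
    (h : ∀ x, dist (f.1 x) (g.1 x) ≤ a) : homDist f g ≤ a :=
  Real.iSup_le h ha

lemma homDist_le_one {X Y : CMSObj} (f g : CMSHom X Y) : homDist f g ≤ 1 :=
  homDist_le f g zero_le_one fun _ => Y.bounded _ _

lemma dist_le_homDist {X Y : CMSObj} (f g : CMSHom X Y) (x : X.carrier) :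
    dist (f.1 x) (g.1 x) ≤ homDist f g :=
  le_ciSup (f := fun x => dist (f.1 x) (g.1 x))
    ⟨1, by rintro r ⟨x, rfl⟩; exact Y.bounded _ _⟩ x

lemma homDist_comm {X Y : CMSObj} (f g : CMSHom X Y) : homDist f g = homDist g f := by
  simp only [homDist, dist_comm]

lemma homDist_triangle {X Y : CMSObj} (f g h : CMSHom X Y) :
    homDist f h ≤ homDist f g + homDist g h :=
  homDist_le _ _ (add_nonneg (homDist_nonneg _ _) (homDist_nonneg _ _)) fun x =>
    (dist_triangle _ _ _).trans (add_le_add (dist_le_homDist f g x) (dist_le_homDist g h x))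

lemma homDist_eq_of_nonpos {X Y : CMSObj} {f g : CMSHom X Y} (h : homDist f g ≤ 0) :
    f = g :=
  Subtype.ext (funext fun x => eq_of_dist_eq_zero
    (le_antisymm ((dist_le_homDist f g x).trans h) dist_nonneg))

lemma cmsEqFun_apply (H : CMSFunctor) {A : CMSObj} (α : CMSHom (H.obj A) A)
    {X : CMSObj} (e : CMSHom X (CMSObj.sum (H.obj X) A)) (s : CMSHom X A)
    (x : X.carrier) :
    (cmsEqFun H α e s).1 x
      = Sum.elim (fun h => α.1 ((H.map s).1 h)) (fun a => a) (e.1 x) := rfl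

end Aux

/-- Let `H : CMS → CMS` be `ε`-contracting (`ε < 1`), `A` a nonempty
`H`-algebra and `e : X → HX + A` a flat equation morphism.  Starting from any
nonexpanding `e†₀ = s₀` and setting `e†_{n+1} = [α, id] ∘ (H e†_n + id) ∘ e`,
the sequence `(e†_n)` is Cauchy in the sup metric and its (uniform) limit is
the unique solution of `e`. -/
theorem cms_iterates_cauchy_limit_unique_solution
    (H : CMSFunctor) (ε : ℝ) (hε : ε < 1) (hcontr : H.Contracting ε)
    (A : CMSObj) (hA : Nonempty A.carrier) (α : CMSHom (H.obj A) A)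
    (X : CMSObj) (e : CMSHom X (CMSObj.sum (H.obj X) A)) (s₀ : CMSHom X A) :
    (∀ δ : ℝ, 0 < δ → ∃ N, ∀ m ≥ N, ∀ n ≥ N,
      homDist (cmsIter H α e s₀ m) (cmsIter H α e s₀ n) < δ) ∧
    ∃ s : CMSHom X A,
      TendstoUniformly (fun n => (cmsIter H α e s₀ n).1) s.1 Filter.atTop ∧
      CMSSol H α e s ∧ ∀ t, CMSSol H α e t → t = s := by
  set ε' : ℝ := max ε 0 with hε'def
  have hε'0 : 0 ≤ ε' := le_max_right _ _
  have hε'1 : ε' < 1 := max_lt hε one_pos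
  set F : CMSHom X A → CMSHom X A := cmsEqFun H α e with hFdef
  set s : ℕ → CMSHom X A := cmsIter H α e s₀ with hsdef
  -- F is an ε'-contraction in the sup metric
  have hFcontr : ∀ f g : CMSHom X A, homDist (F f) (F g) ≤ ε' * homDist f g := by
    intro f g
    have hkey : homDist (H.map f) (H.map g) ≤ ε' * homDist f g :=
      (hcontr X A f g).trans
        (mul_le_mul_of_nonneg_right (le_max_left _ _) (homDist_nonneg _ _))
    refine homDist_le _ _ (mul_nonneg hε'0 (homDist_nonneg _ _)) fun x => ?_
    rw [hFdef, cmsEqFun_apply, cmsEqFun_apply]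
    rcases hx : e.1 x with h | a
    · simp only [Sum.elim_inl]
      calc dist (α.1 ((H.map f).1 h)) (α.1 ((H.map g).1 h))
          ≤ dist ((H.map f).1 h) ((H.map g).1 h) := by
            simpa using α.2.dist_le_mul _ _
        _ ≤ homDist (H.map f) (H.map g) := dist_le_homDist _ _ _
        _ ≤ ε' * homDist f g := hkey
    · simp only [Sum.elim_inr, dist_self]
      exact mul_nonneg hε'0 (homDist_nonneg _ _)
  have hsucc : ∀ n, s (n + 1) = F (s n) := fun n => rfl
  -- geometric bound on successive distances
  have hstep : ∀ n, homDist (s n) (s (n + 1)) ≤ ε' ^ n := by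
    intro n
    induction n with
    | zero => simpa using homDist_le_one (s 0) (s 1)
    | succ n ih =>
      calc homDist (s (n + 1)) (s (n + 2)) ≤ ε' * homDist (s n) (s (n + 1)) := by
            rw [hsucc, hsucc]; exact hFcontr _ _
        _ ≤ ε' * ε' ^ n := mul_le_mul_of_nonneg_left ih hε'0
        _ = ε' ^ (n + 1) := by ring
  set c : ℝ := 1 / (1 - ε') with hcdef
  have h1ε' : 0 < 1 - ε' := by linarith
  have hc0 : 0 < c := by positivity
  have hcc : 1 + ε' * c = c := by rw [hcdef, mul_one_div, one_add_div h1ε'.ne', sub_add_cancel]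
  have hbound : ∀ k m, homDist (s m) (s (m + k)) ≤ ε' ^ m * c := by
    intro k
    induction k with
    | zero =>
      intro m
      have : homDist (s m) (s m) ≤ ε' ^ m * c :=
        homDist_le _ _ (mul_nonneg (pow_nonneg hε'0 m) hc0.le) fun x => by simp only [dist_self]; positivity
      simpa using this
    | succ k ih =>
      intro m
      have h2 : m + (k + 1) = (m + 1) + k := by omega
      calc homDist (s m) (s (m + (k + 1)))
          ≤ homDist (s m) (s (m + 1)) + homDist (s (m + 1)) (s ((m + 1) + k)) := by
            rw [h2]; exact homDist_triangle _ _ _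
        _ ≤ ε' ^ m + ε' ^ (m + 1) * c := add_le_add (hstep m) (ih (m + 1))
        _ = ε' ^ m * (1 + ε' * c) := by ring
        _ = ε' ^ m * c := by rw [hcc]
  -- Cauchy in the sup metric
  have hcauchy : ∀ δ : ℝ, 0 < δ → ∃ N, ∀ m ≥ N, ∀ n ≥ N,
      homDist (s m) (s n) < δ := by
    intro δ hδ
    have htend := tendsto_pow_atTop_nhds_zero_of_lt_one hε'0 hε'1
    obtain ⟨N, hN⟩ := (htend.eventually_lt_const (show (0:ℝ) < δ / c by positivity)).exists
    have hNδ : ε' ^ N * c < δ := (lt_div_iff₀ hc0).1 hN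
    have hmono : ∀ m n, N ≤ m → m ≤ n → homDist (s m) (s n) < δ := by
      intro m n hm hmn
      obtain ⟨k, rfl⟩ := Nat.exists_eq_add_of_le hmn
      calc homDist (s m) (s (m + k)) ≤ ε' ^ m * c := hbound k m
        _ ≤ ε' ^ N * c := mul_le_mul_of_nonneg_right
            (pow_le_pow_of_le_one hε'0 hε'1.le hm) hc0.le
        _ < δ := hNδ
    refine ⟨N, fun m hm n hn => ?_⟩
    rcases le_total m n with h | h
    · exact hmono m n hm h
    · rw [homDist_comm]; exact hmono n m hn h
  refine ⟨hcauchy, ?_⟩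
  -- pointwise limit
  have hptCauchy : ∀ x : X.carrier, CauchySeq fun n => (s n).1 x := by
    intro x
    rw [Metric.cauchySeq_iff]
    intro δ hδ
    obtain ⟨N, hN⟩ := hcauchy δ hδ
    exact ⟨N, fun m hm n hn => lt_of_le_of_lt (dist_le_homDist _ _ _) (hN m hm n hn)⟩
  have hlim : ∀ x, ∃ y, Filter.Tendsto (fun n => (s n).1 x) Filter.atTop (nhds y) :=
    fun x => cauchySeq_tendsto_of_complete (hptCauchy x)
  choose sf hsf using hlim
  have hsfLip : LipschitzWith 1 sf := by
    apply LipschitzWith.of_dist_le_mul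
    intro x y
    refine le_of_tendsto ((hsf x).dist (hsf y)) (Filter.Eventually.of_forall fun n => ?_)
    simpa using (s n).2.dist_le_mul x y
  set slim : CMSHom X A := ⟨sf, hsfLip⟩ with hslim
  -- uniform bound on dist to the limit
  have hunif : ∀ δ : ℝ, 0 < δ → ∃ N, ∀ n ≥ N, homDist (s n) slim ≤ δ := by
    intro δ hδ
    obtain ⟨N, hN⟩ := hcauchy δ hδ
    refine ⟨N, fun n hn => homDist_le _ _ hδ.le fun x => ?_⟩
    have htd : Filter.Tendsto (fun m => dist ((s n).1 x) ((s m).1 x)) Filter.atTop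
        (nhds (dist ((s n).1 x) (sf x))) := tendsto_const_nhds.dist (hsf x)
    refine le_of_tendsto htd ?_
    filter_upwards [Filter.eventually_ge_atTop N] with m hm
    exact (dist_le_homDist (s n) (s m) x).trans (hN n hn m hm).le
  have hTU : TendstoUniformly (fun n => (s n).1) slim.1 Filter.atTop := by
    rw [Metric.tendstoUniformly_iff]
    intro δ hδ
    obtain ⟨N, hN⟩ := hunif (δ / 2) (by positivity)
    filter_upwards [Filter.eventually_ge_atTop N] with n hn x
    calc dist (slim.1 x) ((s n).1 x) = dist ((s n).1 x) (sf x) := dist_comm _ _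
      _ ≤ homDist (s n) slim := dist_le_homDist (s n) slim x
      _ ≤ δ / 2 := hN n hn
      _ < δ := by linarith
  -- slim is a fixed point of F
  have hfix : slim = F slim := by
    apply homDist_eq_of_nonpos
    by_contra hpos
    push_neg at hpos
    obtain ⟨N, hN⟩ := hunif (homDist slim (F slim) / 4) (by positivity)
    have h1 : homDist slim (s (N + 1)) ≤ homDist slim (F slim) / 4 := by
      rw [homDist_comm]; exact hN (N + 1) (by omega)
    have h2 : homDist (s (N + 1)) (F slim) ≤ homDist slim (F slim) / 4 := by
      rw [hsucc]
      calc homDist (F (s N)) (F slim) ≤ ε' * homDist (s N) slim := hFcontr _ _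
        _ ≤ 1 * (homDist slim (F slim) / 4) := by
            refine mul_le_mul hε'1.le (hN N le_rfl) (homDist_nonneg _ _) zero_le_one
        _ = homDist slim (F slim) / 4 := one_mul _
    have := homDist_triangle slim (s (N + 1)) (F slim)
    linarith
  have hsol : CMSSol H α e slim := by
    intro x
    conv_lhs => rw [hfix]
    rw [hFdef, cmsEqFun_apply]
  refine ⟨slim, hTU, hsol, ?_⟩
  intro t ht
  have htfix : t = F t := Subtype.ext (funext fun x => by
    rw [hFdef, cmsEqFun_apply]; exact ht x)
  apply homDist_eq_of_nonpos
  have : homDist t slim ≤ ε' * homDist t slim := by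
    calc homDist t slim = homDist (F t) (F slim) := by rw [← htfix, ← hfix]
      _ ≤ ε' * homDist t slim := hFcontr _ _
  nlinarith [homDist_nonneg t slim]
end

section
/- Let H : Pos → Pos be a locally order-preserving endofunctor of the category of posets and monotone maps, and let α : HA → A be an H-algebra whose carrier is a complete lattice. Then every flat equation morphism e : X → HX + A has a least solution, namely the least fixed point of the monotone map s ↦ [α, id] ∘ (Hs + id) ∘ e on the poset Pos(X, A), and this assignment makes A a complete Elgot algebra. -/
/-- An object of the category `Pos` of posets and monotone maps. -/
structure PosCat : Type 1 where
  carrier : Type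
  [str : PartialOrder carrier]

attribute [instance] PosCat.str

instance : CoeSort PosCat Type := ⟨PosCat.carrier⟩

/-- The poset `A` as an object of `Pos`. -/
def PosCat.of (A : Type) [PartialOrder A] : PosCat := ⟨A⟩

attribute [reducible] PosCat.of

/-- Binary coproduct in `Pos`: the disjoint union, elements of different
summands being incomparable. -/
def PosCat.sum (X Y : PosCat) : PosCat := ⟨X.carrier ⊕ Y.carrier⟩

/-- Coproduct injection `inl` as a monotone map. -/
def posInl {X Y : PosCat} : X →o PosCat.sum X Y :=
  ⟨Sum.inl, Sum.inl_mono⟩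

/-- Coproduct injection `inr` as a monotone map. -/
def posInr {X Y : PosCat} : Y →o PosCat.sum X Y :=
  ⟨Sum.inr, Sum.inr_mono⟩

/-- Copairing `[f, g]` of monotone maps, as a monotone map on the coproduct. -/
def posElim {X Y Z : PosCat} (f : X →o Z) (g : Y →o Z) : PosCat.sum X Y →o Z where
  toFun := Sum.elim f g
  monotone' := by
    rintro (x | x) (y | y) h
    · exact f.monotone (Sum.inl_le_inl_iff.mp h)
    · exact absurd h Sum.not_inl_le_inr
    · exact absurd h Sum.not_inr_le_inl
    · exact g.monotone (Sum.inr_le_inr_iff.mp h)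

/-- `f + g` on coproducts, as a monotone map. -/
def posSumMap {X X' Y Y' : PosCat} (f : X →o X') (g : Y →o Y') :
    PosCat.sum X Y →o PosCat.sum X' Y' :=
  posElim (posInl.comp f) (posInr.comp g)

/-- A locally order-preserving endofunctor of `Pos`: a functor on posets and
monotone maps such that `f ≤ g` implies `Hf ≤ Hg` (pointwise order on
hom-posets). -/
structure PosFunctor : Type 1 where
  obj : PosCat → PosCat
  map : ∀ {X Y : PosCat}, (X →o Y) → (obj X →o obj Y)
  map_id : ∀ X : PosCat, map (OrderHom.id : X →o X) = OrderHom.id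
  map_comp : ∀ {X Y Z : PosCat} (f : X →o Y) (g : Y →o Z),
    map (g.comp f) = (map g).comp (map f)
  mono : ∀ {X Y : PosCat} (f g : X →o Y), f ≤ g → map f ≤ map g

/-- `s` is a solution of the flat equation morphism `e : X →o HX + A`:
`s = [α, id] ∘ (Hs + id) ∘ e`. -/
def PosSol (H : PosFunctor) {A : Type} [PartialOrder A]
    (α : H.obj (PosCat.of A) →o PosCat.of A) {X : PosCat}
    (e : X →o PosCat.sum (H.obj X) (PosCat.of A)) (s : X →o PosCat.of A) : Prop :=
  s = (posElim (α.comp (H.map s)) OrderHom.id).comp e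

/-- The monotone map `s ↦ [α, id] ∘ (Hs + id) ∘ e` on the poset `Pos(X, A)`. -/
def posEqMap (H : PosFunctor) {A : Type} [PartialOrder A]
    (α : H.obj (PosCat.of A) →o PosCat.of A) {X : PosCat}
    (e : X →o PosCat.sum (H.obj X) (PosCat.of A)) :
    (X →o PosCat.of A) →o (X →o PosCat.of A) where
  toFun s := (posElim (α.comp (H.map s)) OrderHom.id).comp e
  monotone' := by
    intro s t hst x
    change Sum.elim (α.comp (H.map s)) OrderHom.id (e x) ≤ Sum.elim (α.comp (H.map t)) OrderHom.id (e x)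
    rcases hxe : e x with h | a
    · exact α.monotone (H.mono _ _ hst h)
    · exact le_rfl

/-- The combined flat equation morphism `f ⊞ e` in `Pos`. -/
def posPlus (H : PosFunctor) {X Y : PosCat} {A : Type} [PartialOrder A]
    (e : X →o PosCat.sum (H.obj X) Y)
    (f : Y →o PosCat.sum (H.obj Y) (PosCat.of A)) :
    PosCat.sum X Y →o PosCat.sum (H.obj (PosCat.sum X Y)) (PosCat.of A) :=
  let yPart : Y →o PosCat.sum (H.obj (PosCat.sum X Y)) (PosCat.of A) :=
    (posSumMap (H.map posInr) OrderHom.id).comp f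
  posElim ((posElim (posInl.comp (H.map posInl)) yPart).comp e) yPart

/-- A complete Elgot algebra in `Pos`: chosen solutions of all flat equation
morphisms, satisfying functoriality and compositionality. -/
structure PosCompleteElgot (H : PosFunctor) (A : Type) [PartialOrder A]
    (α : H.obj (PosCat.of A) →o PosCat.of A) where
  sol : ∀ (X : PosCat), (X →o PosCat.sum (H.obj X) (PosCat.of A)) → (X →o PosCat.of A)
  isSol : ∀ (X : PosCat) (e : X →o PosCat.sum (H.obj X) (PosCat.of A)),
    PosSol H α e (sol X e)
  functorial : ∀ (X Y : PosCat) (e : X →o PosCat.sum (H.obj X) (PosCat.of A))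
    (f : Y →o PosCat.sum (H.obj Y) (PosCat.of A)) (h : X →o Y),
    (posSumMap (H.map h) OrderHom.id).comp e = f.comp h →
      sol X e = (sol Y f).comp h
  compositional : ∀ (X Y : PosCat) (e : X →o PosCat.sum (H.obj X) Y)
    (f : Y →o PosCat.sum (H.obj Y) (PosCat.of A)),
    sol X ((posSumMap OrderHom.id (sol Y f)).comp e) =
      (sol (PosCat.sum X Y) (posPlus H e f)).comp posInl

section Aux

open OrderHom OrdinalApprox Cardinal Order

variable {H : PosFunctor} {A : Type} [CompleteLattice A]

instance posOfCompleteLattice : CompleteLattice (PosCat.of A).carrier :=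
  inferInstanceAs (CompleteLattice A)

variable (α : H.obj (PosCat.of A) →o PosCat.of A)

lemma posEqMap_apply {X : PosCat} (e : X →o PosCat.sum (H.obj X) (PosCat.of A))
    (s : X →o PosCat.of A) (x : X) :
    posEqMap H α e s x = Sum.elim (fun t => α (H.map s t)) _root_.id (e x) := rfl

lemma pos_isLeast {X : PosCat} (e : X →o PosCat.sum (H.obj X) (PosCat.of A)) :
    IsLeast {s : X →o PosCat.of A | PosSol H α e s} (lfp (posEqMap H α e)) :=
  ⟨(map_lfp _).symm, fun _ hs => lfp_le _ hs.symm.le⟩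

lemma pos_comp_sSup {X Y : PosCat} (S : Set (Y →o PosCat.of A)) (h : X →o Y) :
    (sSup S).comp h = sSup ((fun s => s.comp h) '' S) := by
  ext x
  rw [OrderHom.comp_coe, Function.comp_apply, OrderHom.sSup_apply, OrderHom.sSup_apply, iSup_image]
  rfl

lemma pos_bot_comp {X Y : PosCat} (h : X →o Y) :
    (⊥ : Y →o PosCat.of A).comp h = (⊥ : X →o PosCat.of A) := by
  ext x; rfl

lemma pos_comp_fixed {X Y : PosCat}
    (e : X →o PosCat.sum (H.obj X) (PosCat.of A))
    (f : Y →o PosCat.sum (H.obj Y) (PosCat.of A)) (h : X →o Y)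
    (hcomm : (posSumMap (H.map h) OrderHom.id).comp e = f.comp h)
    (s : Y →o PosCat.of A) :
    (posEqMap H α f s).comp h = posEqMap H α e (s.comp h) := by
  ext x
  have hx : posSumMap (H.map h) OrderHom.id (e x) = f (h x) := DFunLike.congr_fun hcomm x
  show Sum.elim (fun t => α (H.map s t)) _root_.id (f (h x))
      = Sum.elim (fun t => α (H.map (s.comp h) t)) _root_.id (e x)
  rcases hex : e x with t | a
  · have hf : f (h x) = Sum.inl (H.map h t) := by rw [← hx, hex]; rfl
    rw [hf, Sum.elim_inl, Sum.elim_inl, H.map_comp]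
    rfl
  · have hf : f (h x) = Sum.inr a := by rw [← hx, hex]; rfl
    rw [hf]; rfl

lemma pos_approx_comp {X Y : PosCat}
    (e : X →o PosCat.sum (H.obj X) (PosCat.of A))
    (f : Y →o PosCat.sum (H.obj Y) (PosCat.of A)) (h : X →o Y)
    (hcomm : (posSumMap (H.map h) OrderHom.id).comp e = f.comp h) :
    ∀ i : Ordinal, (lfpApprox (posEqMap H α f) ⊥ i).comp h = lfpApprox (posEqMap H α e) ⊥ i := by
  intro i
  induction i using Ordinal.induction with
  | h i IH =>
    rw [lfpApprox, lfpApprox]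
    ext x
    simp only [OrderHom.comp_coe, Function.comp_apply, OrderHom.coe_sup, Pi.sup_apply, OrderHom.iSup_apply]
    refine congrArg₂ (· ⊔ ·) rfl (iSup_congr fun j => iSup_congr fun hj => ?_)
    exact DFunLike.congr_fun (by rw [pos_comp_fixed α e f h hcomm, IH j hj] :
      ((posEqMap H α f) (lfpApprox (posEqMap H α f) ⊥ j)).comp h = _) x

lemma pos_lfp_stab {X : PosCat} (e : X →o PosCat.sum (H.obj X) (PosCat.of A))
    {c : Ordinal} (hc : (ord <| succ #(X →o PosCat.of A)) ≤ c) :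
    lfpApprox (posEqMap H α e) ⊥ c = lfp (posEqMap H α e) := by
  rw [← lfpApprox_ord_eq_lfp]
  exact lfpApprox_eq_of_mem_fixedPoints _ hc
    (lfpApprox_ord_mem_fixedPoint _ bot_le)

lemma pos_lfp_functorial {X Y : PosCat}
    (e : X →o PosCat.sum (H.obj X) (PosCat.of A))
    (f : Y →o PosCat.sum (H.obj Y) (PosCat.of A)) (h : X →o Y)
    (hcomm : (posSumMap (H.map h) OrderHom.id).comp e = f.comp h) :
    lfp (posEqMap H α e) = (lfp (posEqMap H α f)).comp h := by
  set c := max (ord <| succ #(X →o PosCat.of A)) (ord <| succ #(Y →o PosCat.of A)) with hc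
  rw [← pos_lfp_stab α e (le_max_left _ _), ← pos_lfp_stab α f (le_max_right _ _),
    pos_approx_comp α e f h hcomm c]

end Aux

section Comp

open OrderHom

variable {H : PosFunctor} {A : Type} [CompleteLattice A]
variable (α : H.obj (PosCat.of A) →o PosCat.of A)

lemma pos_lfp_compositional {X Y : PosCat}
    (e : X →o PosCat.sum (H.obj X) Y)
    (f : Y →o PosCat.sum (H.obj Y) (PosCat.of A)) :
    lfp (posEqMap H α ((posSumMap OrderHom.id (lfp (posEqMap H α f))).comp e)) =
      (lfp (posEqMap H α (posPlus H e f))).comp posInl := by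
  set fd := lfp (posEqMap H α f) with hfddef
  set e' := (posSumMap OrderHom.id fd).comp e with he'def
  set g := posPlus H e f with hgdef
  set t := lfp (posEqMap H α e') with htdef
  set w := lfp (posEqMap H α g) with hwdef
  have hfd : ∀ y, fd y = Sum.elim (fun r => α (H.map fd r)) _root_.id (f y) :=
    fun y => (DFunLike.congr_fun (map_lfp (posEqMap H α f)) y).symm
  have ht : ∀ x, t x = Sum.elim (fun r => α (H.map t r)) _root_.id (e' x) :=
    fun x => (DFunLike.congr_fun (map_lfp (posEqMap H α e')) x).symm
  have hw : ∀ z, w z = Sum.elim (fun r => α (H.map w r)) _root_.id (g z) :=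
    fun z => (DFunLike.congr_fun (map_lfp (posEqMap H α g)) z).symm
  have hgl : ∀ x, g (Sum.inl x) =
      Sum.elim (fun r => Sum.inl (H.map (posInl (Y := Y)) r))
        (fun y => posSumMap (H.map (posInr (X := X))) OrderHom.id (f y)) (e x) :=
    fun x => rfl
  have hgr : ∀ y, g (Sum.inr y) =
      posSumMap (H.map (posInr (X := X))) OrderHom.id (f y) := fun y => rfl
  have he' : ∀ x, e' x =
      Sum.elim (fun r => Sum.inl r) (fun y => Sum.inr (fd y)) (e x) := fun x => rfl
  have hsl : ∀ r : H.obj Y,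
      posSumMap (Y := PosCat.of A) (Y' := PosCat.of A) (H.map (posInr (X := X)))
        OrderHom.id (Sum.inl r) = Sum.inl (H.map posInr r) := fun r => rfl
  have hsr : ∀ a : (PosCat.of A).carrier,
      posSumMap (Y := PosCat.of A) (Y' := PosCat.of A) (H.map (posInr (X := X) (Y := Y)))
        OrderHom.id (Sum.inr a) = Sum.inr a := fun a => rfl
  have hHl : ∀ (u : PosCat.sum X Y →o PosCat.of A) r,
      H.map u (H.map posInl r) = H.map (u.comp posInl) r := by
    intro u r; rw [H.map_comp]; rfl
  have hHr : ∀ (u : PosCat.sum X Y →o PosCat.of A) r,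
      H.map u (H.map posInr r) = H.map (u.comp posInr) r := by
    intro u r; rw [H.map_comp]; rfl
  have hui : (posElim t fd).comp posInl = t := rfl
  have hur : (posElim t fd).comp posInr = fd := rfl
  have ha : posEqMap H α g (posElim t fd) = posElim t fd := by
    ext z
    rw [posEqMap_apply]
    cases z with
    | inl x =>
      rw [show (posElim t fd) (Sum.inl x) = t x from rfl, ht x, he' x, hgl x]
      rcases hex : e x with r | y
      · erw [Sum.elim_inl _ (fun y => posSumMap (H.map (posInr (X := X))) OrderHom.id (f y))]
        simp only [Sum.elim_inl]
        rw [hHl, hui]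
      · erw [Sum.elim_inr (fun r => Sum.inl (H.map (posInl (Y := Y)) r)) (fun y => posSumMap (H.map (posInr (X := X))) OrderHom.id (f y))]
        simp only [Sum.elim_inr]
        rw [hfd y]
        rcases hfy : f y with r | a
        · rw [hsl r]
          simp only [Sum.elim_inl]
          rw [hHr, hur]; rfl
        · rw [hsr a]
          rfl
    | inr y =>
      rw [show (posElim t fd) (Sum.inr y) = fd y from rfl, hfd y, hgr y]
      rcases hfy : f y with r | a
      · rw [hsl r]
        simp only [Sum.elim_inl]
        rw [hHr, hur]
      · rw [hsr a]
        rfl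
  have hwle : w ≤ posElim t fd := lfp_le _ ha.le
  have hcr : w.comp posInr = fd := by
    apply le_antisymm
    · intro y; exact hwle (Sum.inr y)
    · rw [hfddef]
      apply lfp_le
      have hfix : posEqMap H α f (w.comp posInr) = w.comp posInr := by
        ext y
        rw [posEqMap_apply]
        rw [show (w.comp posInr) y = w (Sum.inr y) from rfl, hw (Sum.inr y), hgr y]
        rcases hfy : f y with r | a
        · rw [hsl r]
          simp only [Sum.elim_inl]
          rw [hHr]
        · rw [hsr a]
          rfl
      exact hfix.le
  have hcl : w.comp posInl = t := by
    apply le_antisymm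
    · intro x; exact hwle (Sum.inl x)
    · rw [htdef]
      apply lfp_le
      have hfix : posEqMap H α e' (w.comp posInl) = w.comp posInl := by
        ext x
        rw [posEqMap_apply]
        rw [show (w.comp posInl) x = w (Sum.inl x) from rfl, hw (Sum.inl x), hgl x, he' x]
        rcases hex : e x with r | y
        · erw [Sum.elim_inl _ (fun y => posSumMap (H.map (posInr (X := X))) OrderHom.id (f y))]
          simp only [Sum.elim_inl]
          rw [hHl]
        · erw [Sum.elim_inr (fun r => Sum.inl (H.map (posInl (Y := Y)) r)) (fun y => posSumMap (H.map (posInr (X := X))) OrderHom.id (f y))]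
          simp only [Sum.elim_inr]
          rcases hfy : f y with r | a
          · rw [hsl r]
            simp only [Sum.elim_inl]
            rw [hHr, hcr, hfd y, hfy]
            rfl
          · rw [hsr a]
            rw [hfd y, hfy]
            rfl
      exact hfix.le
  exact hcl.symm

end Comp

/-- Let `H : Pos → Pos` be locally order-preserving and `α : HA →o A` an
`H`-algebra carried by a complete lattice.  Then every flat equation morphism
`e : X →o HX + A` has a least solution, namely the least fixed point (by
Knaster–Tarski) of the monotone map `s ↦ [α, id] ∘ (Hs + id) ∘ e` on
`Pos(X, A)`, and this assignment of least solutions makes `A` a complete Elgot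
algebra. -/
theorem pos_least_solution_elgot (H : PosFunctor) (A : Type) [CompleteLattice A]
    (α : H.obj (PosCat.of A) →o PosCat.of A) :
    (∀ (X : PosCat) (e : X →o PosCat.sum (H.obj X) (PosCat.of A)),
      IsLeast {s : X →o PosCat.of A | PosSol H α e s}
        (OrderHom.lfp (posEqMap H α e))) ∧
    ∃ E : PosCompleteElgot H A α,
      ∀ (X : PosCat) (e : X →o PosCat.sum (H.obj X) (PosCat.of A)),
        E.sol X e = OrderHom.lfp (posEqMap H α e) := by
  refine ⟨fun X e => pos_isLeast α e,
    ⟨⟨fun X e => OrderHom.lfp (posEqMap H α e), fun X e => (pos_isLeast α e).1,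
      fun X Y e f h hc => pos_lfp_functorial α e f h hc,
      fun X Y e f => pos_lfp_compositional α e f⟩, fun X e => rfl⟩⟩
end

section
/- A unary algebra α : A → A in Set (i.e., an algebra for the identity functor on Set) admits an Elgot algebra structure if and only if α has a fixed point. Moreover, each fixed point a₀ of α yields a complete Elgot algebra structure where, for e : X → X + A, the solution sends x to α^k(a) if there is a sequence x = x₀, …, x_k with e(x_i) = x_{i+1} for i < k and e(x_k) = a ∈ A, and to a₀ otherwise. -/
/-- `s` is a solution of `e : X → X ⊕ A` in the unary algebra `(A, α)`
(`H = Id` on `Set`): `s = [α, id] ∘ (s + id) ∘ e`. -/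
def UnarySol {A X : Type} (α : A → A) (e : X → X ⊕ A) (s : X → A) : Prop :=
  ∀ x, s x = Sum.elim (fun x' => α (s x')) id (e x)

/-- The combined flat equation morphism `f ⊞ e : X ⊕ Y → (X ⊕ Y) ⊕ A`
(for `H = Id`): `(can + id_A) ∘ (id + f) ∘ [e, inr]`. -/
def unaryPlus {X Y A : Type} (e : X → X ⊕ Y) (f : Y → Y ⊕ A) :
    X ⊕ Y → (X ⊕ Y) ⊕ A :=
  Sum.elim
    (fun x => Sum.elim (fun x' => Sum.inl (Sum.inl x'))
      (fun y => Sum.map Sum.inr id (f y)) (e x))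
    (fun y => Sum.map Sum.inr id (f y))

/-- An Elgot algebra structure on the unary algebra `(A, α)`: a choice of
solutions for all finitary flat equation morphisms, satisfying functoriality
and compositionality. -/
structure UnaryElgot (A : Type) (α : A → A) where
  sol : ∀ (X : Type) [Fintype X], (X → X ⊕ A) → (X → A)
  isSol : ∀ (X : Type) [Fintype X] (e : X → X ⊕ A), UnarySol α e (sol X e)
  functorial : ∀ (X Y : Type) [Fintype X] [Fintype Y]
    (e : X → X ⊕ A) (f : Y → Y ⊕ A) (h : X → Y),
    (∀ x, Sum.map h id (e x) = f (h x)) → ∀ x, sol X e x = sol Y f (h x)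
  compositional : ∀ (X Y : Type) [Fintype X] [Fintype Y]
    (e : X → X ⊕ Y) (f : Y → Y ⊕ A) (x : X),
    sol X (fun x' => Sum.map id (sol Y f) (e x')) x =
      sol (X ⊕ Y) (unaryPlus e f) (Sum.inl x)

/-- A complete Elgot algebra structure on the unary algebra `(A, α)`: a choice of
solutions for all flat equation morphisms, satisfying functoriality and
compositionality. -/
structure UnaryCompleteElgot (A : Type) (α : A → A) where
  sol : ∀ (X : Type), (X → X ⊕ A) → (X → A)
  isSol : ∀ (X : Type) (e : X → X ⊕ A), UnarySol α e (sol X e)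
  functorial : ∀ (X Y : Type) (e : X → X ⊕ A) (f : Y → Y ⊕ A) (h : X → Y),
    (∀ x, Sum.map h id (e x) = f (h x)) → ∀ x, sol X e x = sol Y f (h x)
  compositional : ∀ (X Y : Type) (e : X → X ⊕ Y) (f : Y → Y ⊕ A) (x : X),
    sol X (fun x' => Sum.map id (sol Y f) (e x')) x =
      sol (X ⊕ Y) (unaryPlus e f) (Sum.inl x)


/-- The iteration sequence of `e` starting at `x`. -/
def seqF {A X : Type} (e : X → X ⊕ A) (x : X) : ℕ → X ⊕ A
  | 0 => Sum.inl x
  | n + 1 => Sum.elim e Sum.inr (seqF e x n)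

lemma seqF_shift {A X : Type} (e : X → X ⊕ A) {x x' : X} (h : e x = Sum.inl x') :
    ∀ n, seqF e x (n + 1) = seqF e x' n := by
  intro n
  induction n with
  | zero => simp [seqF, h]
  | succ n ih =>
    rw [show n + 1 + 1 = (n + 1) + 1 from rfl, seqF, ih]
    rfl

lemma seqF_stable {A X : Type} (e : X → X ⊕ A) {x : X} {a : A} {n : ℕ}
    (h : seqF e x n = Sum.inr a) : ∀ m, n ≤ m → seqF e x m = Sum.inr a := by
  intro m hm
  induction m with
  | zero => have : n = 0 := by omega
            rwa [this] at h
  | succ m ih =>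
    rcases Nat.lt_or_ge n (m+1) with h1 | h1
    · have := ih (by omega)
      simp [seqF, this]
    · have : n = m + 1 := by omega
      rwa [this] at h

open Classical in
/-- The canonical solution determined by a fixed point `a₀` of `α`. -/
noncomputable def solF {A X : Type} (α : A → A) (a₀ : A) (e : X → X ⊕ A) (x : X) : A :=
  if h : ∃ n, (seqF e x n).isRight then
    Sum.elim (fun _ => a₀) (fun a => α^[Nat.find h - 1] a) (seqF e x (Nat.find h))
  else a₀

lemma solF_eq_iter {A X : Type} (α : A → A) (a₀ : A) (e : X → X ⊕ A) (x : X)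
    (k : ℕ) (a : A) (hleft : ∀ i ≤ k, (seqF e x i).isLeft)
    (hhit : seqF e x (k + 1) = Sum.inr a) :
    solF α a₀ e x = α^[k] a := by
  have hex : ∃ n, (seqF e x n).isRight := ⟨k + 1, by rw [hhit]; rfl⟩
  have hfind : Nat.find hex = k + 1 := by
    refine le_antisymm (Nat.find_le (by rw [hhit]; rfl)) ?_
    rw [Nat.succ_le, Nat.lt_find_iff]
    intro m hm
    simp [Sum.not_isRight, hleft m hm]
  rw [solF, dif_pos hex, hfind, hhit]
  simp

lemma solF_eq_default {A X : Type} (α : A → A) (a₀ : A) (e : X → X ⊕ A) (x : X)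
    (h : ¬ ∃ n, (seqF e x n).isRight) : solF α a₀ e x = a₀ := by
  rw [solF, dif_neg h]

lemma find_struct {A X : Type} (e : X → X ⊕ A) (x : X)
    (h : ∃ n, (seqF e x n).isRight) :
    ∃ k a, seqF e x (k + 1) = Sum.inr a ∧ ∀ i ≤ k, (seqF e x i).isLeft := by
  have h0 : Nat.find h ≠ 0 := by
    intro h0
    have := Nat.find_spec h
    rw [h0] at this
    simp [seqF] at this
  obtain ⟨k, hk⟩ := Nat.exists_eq_succ_of_ne_zero h0
  obtain ⟨a, ha⟩ := Sum.isRight_iff.mp (Nat.find_spec h)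
  rw [hk] at ha
  exact ⟨k, a, ha, fun i hi => Sum.not_isRight.mp (Nat.find_min h (by omega))⟩

lemma solF_isSol {A X : Type} (α : A → A) (a₀ : A) (ha₀ : α a₀ = a₀)
    (e : X → X ⊕ A) : ∀ x, solF α a₀ e x =
      Sum.elim (fun x' => α (solF α a₀ e x')) id (e x) := by
  intro x
  rcases he : e x with x' | a
  · simp only [Sum.elim_inl]
    by_cases h' : ∃ m, (seqF e x' m).isRight
    · obtain ⟨k, a, hhit, hleft⟩ := find_struct e x' h'
      rw [solF_eq_iter α a₀ e x' k a hleft hhit]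
      have hleft2 : ∀ i ≤ k + 1, (seqF e x i).isLeft := by
        intro i hi
        match i with
        | 0 => rfl
        | j + 1 =>
          rw [seqF_shift e he j]
          exact hleft j (by omega)
      have hhit2 : seqF e x (k + 1 + 1) = Sum.inr a := by
        rw [seqF_shift e he (k + 1)]; exact hhit
      rw [solF_eq_iter α a₀ e x (k + 1) a hleft2 hhit2,
        Function.iterate_succ_apply']
    · have h2 : ¬ ∃ n, (seqF e x n).isRight := by
        rintro ⟨n, hn⟩
        match n with
        | 0 => simp [seqF] at hn
        | j + 1 =>
          rw [seqF_shift e he j] at hn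
          exact h' ⟨j, hn⟩
      rw [solF_eq_default α a₀ e x h2, solF_eq_default α a₀ e x' h', ha₀]
  · simp only [Sum.elim_inr, id]
    have hhit : seqF e x (0 + 1) = Sum.inr a := by simp [seqF, he]
    have hleft : ∀ i ≤ 0, (seqF e x i).isLeft := by
      intro i hi
      have : i = 0 := by omega
      rw [this]; rfl
    rw [solF_eq_iter α a₀ e x 0 a hleft hhit]
    rfl

lemma seqF_map {A X Y : Type} (e : X → X ⊕ A) (f : Y → Y ⊕ A) (h : X → Y)
    (hc : ∀ x, Sum.map h id (e x) = f (h x)) (x : X) :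
    ∀ n, seqF f (h x) n = Sum.map h id (seqF e x n) := by
  intro n
  induction n with
  | zero => rfl
  | succ n ih =>
    rw [seqF, ih, seqF]
    rcases hs : seqF e x n with y | a
    · simp [← hc y]
    · simp

lemma solF_functorial {A X Y : Type} (α : A → A) (a₀ : A)
    (e : X → X ⊕ A) (f : Y → Y ⊕ A) (h : X → Y)
    (hc : ∀ x, Sum.map h id (e x) = f (h x)) (x : X) :
    solF α a₀ e x = solF α a₀ f (h x) := by
  by_cases hx : ∃ n, (seqF e x n).isRight
  · obtain ⟨k, a, hhit, hleft⟩ := find_struct e x hx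
    rw [solF_eq_iter α a₀ e x k a hleft hhit]
    have hhit2 : seqF f (h x) (k + 1) = Sum.inr a := by
      rw [seqF_map e f h hc x, hhit]; rfl
    have hleft2 : ∀ i ≤ k, (seqF f (h x) i).isLeft := by
      intro i hi
      rw [seqF_map e f h hc x]
      obtain ⟨y, hy⟩ := Sum.isLeft_iff.mp (hleft i hi)
      rw [hy]; rfl
    rw [solF_eq_iter α a₀ f (h x) k a hleft2 hhit2]
  · have h2 : ¬ ∃ n, (seqF f (h x) n).isRight := by
      rintro ⟨n, hn⟩
      rw [seqF_map e f h hc x] at hn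
      refine hx ⟨n, ?_⟩
      rcases hs : seqF e x n with y | a
      · rw [hs] at hn; simp at hn
      · rfl
    rw [solF_eq_default α a₀ e x hx, solF_eq_default α a₀ f (h x) h2]

section Comp

variable {A X Y : Type} (α : A → A) (a₀ : A) (e : X → X ⊕ Y) (f : Y → Y ⊕ A)

/-- Phase 1 for `g`: while the `e`-trace stays in `X`. -/
lemma phase1g (x : X) (n : ℕ) (y : X) (hy : seqF e x n = Sum.inl y) :
    seqF (fun x' => Sum.map id (solF α a₀ f) (e x')) x n = Sum.inl y := by
  induction n generalizing y with
  | zero => cases hy; rfl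
  | succ n ih =>
    rw [seqF] at hy
    rcases hs : seqF e x n with w | z
    · have h1 := ih w hs
      rw [hs] at hy
      simp only [Sum.elim_inl] at hy
      rw [seqF, h1]
      simp [hy]
    · rw [hs] at hy
      simp at hy

/-- Phase 1 for the combined morphism: while the `e`-trace stays in `X`. -/
lemma phase1E (x : X) (n : ℕ) (y : X) (hy : seqF e x n = Sum.inl y) :
    seqF (unaryPlus e f) (Sum.inl x) n = Sum.inl (Sum.inl y) := by
  induction n generalizing y with
  | zero => cases hy; rfl
  | succ n ih =>
    rw [seqF] at hy
    rcases hs : seqF e x n with w | z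
    · have h2 := ih w hs
      rw [hs] at hy
      simp only [Sum.elim_inl] at hy
      rw [seqF, h2]
      simp [unaryPlus, hy]
    · rw [hs] at hy
      simp at hy

/-- Phase 2 for the combined morphism, after the `e`-trace exits to `Y`. -/
lemma phase2 (x : X) (k : ℕ) (w : X) (y : Y) (hw : seqF e x k = Sum.inl w)
    (hy : e w = Sum.inr y) :
    ∀ j, seqF (unaryPlus e f) (Sum.inl x) (k + 1 + j) =
      Sum.map Sum.inr id (seqF f y (j + 1)) := by
  have h2 := phase1E e f x k w hw
  intro j
  induction j with
  | zero =>
    rw [seqF, h2]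
    simp [unaryPlus, hy, seqF]
  | succ j ih =>
    rw [show k + 1 + (j + 1) = (k + 1 + j) + 1 from rfl, seqF, ih]
    rcases ht : seqF f y (j + 1) with y' | a
    · rw [show j + 1 + 1 = (j + 1) + 1 from rfl, seqF, ht]
      simp [unaryPlus]
    · rw [show j + 1 + 1 = (j + 1) + 1 from rfl, seqF, ht]
      simp

lemma solF_compositional (ha₀ : α a₀ = a₀) (x : X) :
    solF α a₀ (fun x' => Sum.map id (solF α a₀ f) (e x')) x =
      solF α a₀ (unaryPlus e f) (Sum.inl x) := by
  set g := fun x' => Sum.map id (solF α a₀ f) (e x') with hg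
  by_cases h1 : ∃ n, (seqF e x n).isRight
  · obtain ⟨k, y, hhit, hleft⟩ := find_struct e x h1
    obtain ⟨w, hw⟩ := Sum.isLeft_iff.mp (hleft k le_rfl)
    have hy : e w = Sum.inr y := by
      rw [seqF, hw] at hhit
      exact hhit
    -- `g`-trace facts
    have hgleft : ∀ i ≤ k, (seqF g x i).isLeft := by
      intro i hi
      obtain ⟨w', hw'⟩ := Sum.isLeft_iff.mp (hleft i hi)
      rw [phase1g α a₀ e f x i w' hw']; rfl
    have hghit : seqF g x (k + 1) = Sum.inr (solF α a₀ f y) := by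
      rw [seqF, phase1g α a₀ e f x k w hw]
      simp [hg, hy]
    have hEleft1 : ∀ i ≤ k, (seqF (unaryPlus e f) (Sum.inl x) i).isLeft := by
      intro i hi
      obtain ⟨w', hw'⟩ := Sum.isLeft_iff.mp (hleft i hi)
      rw [phase1E e f x i w' hw']; rfl
    by_cases h2 : ∃ m, (seqF f y m).isRight
    · obtain ⟨m, a, hfhit, hfleft⟩ := find_struct f y h2
      have hsolfy : solF α a₀ f y = α^[m] a := solF_eq_iter α a₀ f y m a hfleft hfhit
      rw [solF_eq_iter α a₀ g x k _ hgleft hghit, hsolfy]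
      have hEhit : seqF (unaryPlus e f) (Sum.inl x) ((k + m) + 1) = Sum.inr a := by
        have := phase2 e f x k w y hw hy m
        rw [show k + 1 + m = k + m + 1 by omega] at this
        rw [this, hfhit]; rfl
      have hEleft : ∀ i ≤ k + m, (seqF (unaryPlus e f) (Sum.inl x) i).isLeft := by
        intro i hi
        rcases Nat.lt_or_ge i (k + 1) with hik | hik
        · exact hEleft1 i (by omega)
        · obtain ⟨j, hj⟩ : ∃ j, i = k + 1 + j := ⟨i - (k + 1), by omega⟩
          rw [hj, phase2 e f x k w y hw hy j]
          have hjm : j + 1 ≤ m := by omega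
          obtain ⟨w', hw'⟩ := Sum.isLeft_iff.mp (hfleft (j + 1) hjm)
          rw [hw']; rfl
      rw [solF_eq_iter α a₀ (unaryPlus e f) (Sum.inl x) (k + m) a hEleft hEhit,
        Function.iterate_add_apply]
    · -- f never hits
      have hsolfy : solF α a₀ f y = a₀ := solF_eq_default α a₀ f y h2
      rw [solF_eq_iter α a₀ g x k _ hgleft hghit, hsolfy,
        Function.iterate_fixed ha₀ k]
      have hEno : ¬ ∃ n, (seqF (unaryPlus e f) (Sum.inl x) n).isRight := by
        rintro ⟨n, hn⟩
        rcases Nat.lt_or_ge n (k + 1) with hik | hik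
        · obtain ⟨w', hw'⟩ := Sum.isLeft_iff.mp (hEleft1 n (by omega))
          rw [hw'] at hn
          simp at hn
        · obtain ⟨j, hj⟩ : ∃ j, n = k + 1 + j := ⟨n - (k + 1), by omega⟩
          rw [hj, phase2 e f x k w y hw hy j] at hn
          apply h2
          refine ⟨j + 1, ?_⟩
          rcases hs : seqF f y (j + 1) with w' | a
          · rw [hs] at hn; simp at hn
          · rfl
      rw [solF_eq_default α a₀ _ _ hEno]
  · -- e never exits X
    have hall : ∀ n, ∃ w, seqF e x n = Sum.inl w := by
      intro n
      rcases hs : seqF e x n with w | z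
      · exact ⟨w, rfl⟩
      · exact absurd ⟨n, by rw [hs]; rfl⟩ h1
    have hgno : ¬ ∃ n, (seqF g x n).isRight := by
      rintro ⟨n, hn⟩
      obtain ⟨w, hw⟩ := hall n
      rw [phase1g α a₀ e f x n w hw] at hn
      simp at hn
    have hEno : ¬ ∃ n, (seqF (unaryPlus e f) (Sum.inl x) n).isRight := by
      rintro ⟨n, hn⟩
      obtain ⟨w, hw⟩ := hall n
      rw [phase1E e f x n w hw] at hn
      simp at hn
    rw [solF_eq_default α a₀ g x hgno, solF_eq_default α a₀ _ _ hEno]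

end Comp

noncomputable def mkComplete {A : Type} (α : A → A) (a₀ : A) (ha₀ : α a₀ = a₀) :
    UnaryCompleteElgot A α where
  sol X e := solF α a₀ e
  isSol X e := solF_isSol α a₀ ha₀ e
  functorial X Y e f h hc x := solF_functorial α a₀ e f h hc x
  compositional X Y e f x := solF_compositional α a₀ e f ha₀ x

/-- A unary algebra `α : A → A` in `Set` admits an Elgot algebra structure iff
`α` has a fixed point. Moreover, each fixed point `a₀` of `α` yields a complete
Elgot algebra structure whose solution sends `x` to `α^k(a)` whenever there is a
sequence `x = p₀, …, p_k` with `e (p_i) = p_{i+1}` for `i < k` and `e (p_k) = a ∈ A`,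
and to `a₀` otherwise. -/
theorem unary_elgot_iff_fixed_point {A : Type} (α : A → A) :
    (Nonempty (UnaryElgot A α) ↔ ∃ a, α a = a) ∧
      (∀ a₀, α a₀ = a₀ →
        ∃ E : UnaryCompleteElgot A α, ∀ (X : Type) (e : X → X ⊕ A) (x : X),
          (∀ (k : ℕ) (p : ℕ → X) (a : A), p 0 = x →
            (∀ i < k, e (p i) = Sum.inl (p (i + 1))) → e (p k) = Sum.inr a →
              E.sol X e x = α^[k] a) ∧
          ((¬ ∃ (k : ℕ) (p : ℕ → X) (a : A), p 0 = x ∧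
              (∀ i < k, e (p i) = Sum.inl (p (i + 1))) ∧ e (p k) = Sum.inr a) →
            E.sol X e x = a₀)) := by
  constructor
  · constructor
    · rintro ⟨E⟩
      exact ⟨E.sol PUnit (fun _ => Sum.inl PUnit.unit) PUnit.unit,
        (E.isSol PUnit (fun _ => Sum.inl PUnit.unit) PUnit.unit).symm⟩
    · rintro ⟨a, ha⟩
      let E := mkComplete α a ha
      exact ⟨⟨fun X _ e => E.sol X e, fun X _ e => E.isSol X e,
        fun X Y _ _ e f h hc x => E.functorial X Y e f h hc x,
        fun X Y _ _ e f x => E.compositional X Y e f x⟩⟩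
  · intro a₀ ha₀
    refine ⟨mkComplete α a₀ ha₀, fun X e x => ⟨?_, ?_⟩⟩
    · intro k p a hp0 hstep hout
      have hseq : ∀ i, i ≤ k → seqF e x i = Sum.inl (p i) := by
        intro i
        induction i with
        | zero => intro _; rw [hp0]; rfl
        | succ i ih =>
          intro hi
          rw [seqF, ih (by omega)]
          simp [hstep i (by omega)]
      have hhit : seqF e x (k + 1) = Sum.inr a := by
        rw [seqF, hseq k le_rfl]
        simp [hout]
      exact solF_eq_iter α a₀ e x k a
        (fun i hi => by rw [hseq i hi]; rfl) hhit
    · intro hno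
      apply solF_eq_default
      rintro ⟨n, hn⟩
      obtain ⟨k, a, hhit, hleft⟩ := find_struct e x ⟨n, hn⟩
      apply hno
      set p : ℕ → X := fun i => Sum.elim id (fun _ => x) (seqF e x i) with hpdef
      have hp : ∀ i, i ≤ k → seqF e x i = Sum.inl (p i) := by
        intro i hi
        obtain ⟨w, hw⟩ := Sum.isLeft_iff.mp (hleft i hi)
        rw [hpdef]
        simp [hw]
      refine ⟨k, p, a, ?_, ?_, ?_⟩
      · have := hp 0 (Nat.zero_le k)
        rw [seqF] at this
        exact (Sum.inl.injEq _ _ ▸ this).symm ▸ rfl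
      · intro i hi
        have h1 := hp i (by omega)
        have h2 := hp (i + 1) (by omega)
        rw [seqF, h1] at h2
        exact h2
      · have := hhit
        rw [seqF, hp k le_rfl] at this
        exact this
end

section
/- In every iterative algebra for a polynomial Set functor, each operation symbol σ of arity k has a unique idempotent: there is a unique a ∈ A with σ_A(a, …, a) = a. -/
/-- The polynomial `Set` functor `H_Σ X = Σ₀ + Σ₁ × X + Σ₂ × X² + …` for a
finitary signature `Sig` (where `Sig k` is the set of `k`-ary operation symbols). -/
def PolyObj (Sig : ℕ → Type) (X : Type) : Type :=
  Σ k : ℕ, Sig k × (Fin k → X)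

/-- `s` is a solution of the flat equation morphism `e : X → H_Σ X ⊕ A` in the
`Σ`-algebra `(A, α)`: `s = [α, id] ∘ (H_Σ s + id) ∘ e`. -/
def PolySol {Sig : ℕ → Type} {A X : Type} (α : PolyObj Sig A → A)
    (e : X → PolyObj Sig X ⊕ A) (s : X → A) : Prop :=
  ∀ x, s x = Sum.elim (fun t => α ⟨t.1, t.2.1, fun i => s (t.2.2 i)⟩) id (e x)

/-- In every iterative algebra for a polynomial `Set` functor, each operation
symbol `σ` of arity `k` has a unique idempotent: a unique `a` with
`σ_A(a, …, a) = a`. -/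
theorem iterative_unique_idempotent {Sig : ℕ → Type} {A : Type}
    (α : PolyObj Sig A → A)
    (iterative : ∀ (X : Type) (_ : Fintype X) (e : X → PolyObj Sig X ⊕ A),
      ∃! s : X → A, PolySol α e s) :
    ∀ (k : ℕ) (σ : Sig k), ∃! a : A, α ⟨k, σ, fun _ => a⟩ = a := by
  intro k σ
  obtain ⟨s, hs, huniq⟩ := iterative Unit inferInstance
    (fun _ => Sum.inl ⟨k, σ, fun _ => ()⟩)
  refine ⟨s (), (hs ()).symm, fun a ha => ?_⟩
  have := huniq (fun _ => a) (fun _ => ha.symm)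
  exact congrFun this ()
end

section
/- Every solution-preserving morphism between complete Elgot algebras is a homomorphism of H-algebras: if h : (A, α, (-)†) → (B, β, (-)‡) satisfies h ∘ e† = (h ▹ e)‡ for all flat equation morphisms e in A, then h ∘ α = β ∘ Hh. -/
open CategoryTheory Limits

universe u v

variable {C : Type u} [Category.{v} C] [HasBinaryCoproducts C]

/-- A complete Elgot algebra for `H`: an `H`-algebra `(A, α)` together with a
choice of solution for every flat equation morphism, satisfying functoriality
and compositionality. -/
structure CompleteElgotStr (H : C ⥤ C) (A : C) (α : H.obj A ⟶ A) where
  sol : ∀ {X : C}, (X ⟶ H.obj X ⨿ A) → (X ⟶ A)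
  isSol : ∀ {X : C} (e : X ⟶ H.obj X ⨿ A), IsSolution H α e (sol e)
  functorial : ∀ {X Y : C} (e : X ⟶ H.obj X ⨿ A) (f : Y ⟶ H.obj Y ⨿ A) (h : X ⟶ Y),
    e ≫ coprod.map (H.map h) (𝟙 A) = h ≫ f → sol e = h ≫ sol f
  compositional : ∀ {X Y : C} (e : X ⟶ H.obj X ⨿ Y) (f : Y ⟶ H.obj Y ⨿ A),
    sol (afterEq H e (sol f)) = coprod.inl ≫ sol (plusEq H e f)

/-- `h : A ⟶ B` preserves solutions: `h ∘ e† = (h ▹ e)‡` for every flat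
equation morphism `e` in `A`. -/
def SolPreserving {H : C ⥤ C} {A B : C} {α : H.obj A ⟶ A} {β : H.obj B ⟶ B}
    (EA : CompleteElgotStr H A α) (EB : CompleteElgotStr H B β) (h : A ⟶ B) : Prop :=
  ∀ (X : C) (e : X ⟶ H.obj X ⨿ A), EA.sol e ≫ h = EB.sol (afterEq H e h)

/-- Every solution-preserving morphism between complete Elgot algebras is a
homomorphism of `H`-algebras: `h ∘ α = β ∘ Hh`. -/
theorem solPreserving_isAlgebraHom (H : C ⥤ C) {A B : C}
    {α : H.obj A ⟶ A} {β : H.obj B ⟶ B}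
    (EA : CompleteElgotStr H A α) (EB : CompleteElgotStr H B β)
    (h : A ⟶ B) (hpres : SolPreserving EA EB h) :
    α ≫ h = H.map h ≫ β := by
  set e : H.obj A ⨿ A ⟶ H.obj (H.obj A ⨿ A) ⨿ A :=
    coprod.map (H.map coprod.inr) (𝟙 A) with he
  have hs := EA.isSol e
  have ht := EB.isSol (afterEq H e h)
  have hp := hpres _ e
  set s := EA.sol e with hsdef
  set t := EB.sol (afterEq H e h) with htdef
  unfold IsSolution at hs ht
  -- inr ≫ s = 𝟙 A
  have h2 : (coprod.inr : A ⟶ H.obj A ⨿ A) ≫ s = 𝟙 A := by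
    conv_lhs => rw [hs]
    simp [he]
    exact coprod.inr_desc _ _
  -- inl ≫ s = α
  have h3 : (coprod.inl : H.obj A ⟶ H.obj A ⨿ A) ≫ s = α := by
    conv_lhs => rw [hs]
    simp only [he, coprod.map_desc, coprod.inl_map_assoc, coprod.inl_desc,
      coprod.map_map_assoc, Category.id_comp, Category.comp_id,
      coprod.inl_map, coprod.inl_desc_assoc]
    rw [← H.map_comp_assoc, h2, H.map_id, Category.id_comp]
  -- inr ≫ t = h
  have h4 : (coprod.inr : A ⟶ H.obj A ⨿ A) ≫ t = h := by
    conv_lhs => rw [ht]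
    simp [he, afterEq]
    exact coprod.inr_desc _ _
  -- inl ≫ t = H.map h ≫ β
  have h5 : (coprod.inl : H.obj A ⟶ H.obj A ⨿ A) ≫ t = H.map h ≫ β := by
    conv_lhs => rw [ht]
    simp only [afterEq, he, Category.assoc, coprod.inl_map_assoc,
      coprod.map_map_assoc, Category.id_comp, Category.comp_id,
      coprod.inl_map, coprod.inl_desc, coprod.inl_map_assoc]
    rw [← H.map_comp_assoc, h4]
  calc α ≫ h = coprod.inl ≫ s ≫ h := by rw [← Category.assoc, h3]
    _ = coprod.inl ≫ t := by rw [hp]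
    _ = H.map h ≫ β := h5
end

section
/- Let (A, α, (-)†) be a complete Elgot algebra and consider the flat equation morphism e = H inr + id_A : HA + A → H(HA + A) + A. Then e† = [α, id_A] : HA + A → A. -/
open CategoryTheory Limits

universe u v

variable {C : Type u} [Category.{v} C] [HasBinaryCoproducts C]

/-- In a complete Elgot algebra `(A, α, †)`, the flat equation morphism
`e = H inr + id_A : HA + A ⟶ H(HA + A) + A` has chosen solution
`e† = [α, id_A]`. -/
theorem sol_of_flipped_algebra (H : C ⥤ C) {A : C} (α : H.obj A ⟶ A)
    (E : CompleteElgotStr H A α) :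
    E.sol (coprod.map (H.map (coprod.inr : A ⟶ H.obj A ⨿ A)) (𝟙 A)) =
      coprod.desc α (𝟙 A) := by
  have hs := E.isSol (coprod.map (H.map (coprod.inr : A ⟶ H.obj A ⨿ A)) (𝟙 A))
  set s := E.sol (coprod.map (H.map (coprod.inr : A ⟶ H.obj A ⨿ A)) (𝟙 A)) with hsdef
  unfold IsSolution at hs
  have hr : (coprod.inr : A ⟶ H.obj A ⨿ A) ≫ s = 𝟙 A := by
    conv_lhs => rw [hs]
    simp
    exact coprod.inr_desc _ _
  have hl : (coprod.inl : H.obj A ⟶ H.obj A ⨿ A) ≫ s = α := by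
    conv_lhs => rw [hs]
    simp only [coprod.map_desc, coprod.inl_desc]
    rw [← Category.assoc, ← H.map_comp, hr, H.map_id, Category.id_comp]
  apply coprod.hom_ext
  · exact hl.trans (coprod.inl_desc _ _).symm
  · exact hr.trans (coprod.inr_desc _ _).symm
end

section
/- Let (A, α, (-)†) be a complete Elgot algebra and m : Y → A a morphism. Then HA + Y carries a complete Elgot algebra structure with algebra map inl ∘ H[α, m] : H(HA + Y) → HA + Y and solutions e‡ := ([H(ē†), id_{HA}] + id_Y) ∘ e for e : X → HX + HA + Y, where ē := (id_{HX} + [α, m]) ∘ e. Moreover [α, m] : HA + Y → A is a solution-preserving morphism. -/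
open CategoryTheory Limits

universe u v

variable {C : Type u} [Category.{v} C] [HasBinaryCoproducts C]

lemma afterEq_afterEq (H : C ⥤ C) {X Y Z W : C} (e : X ⟶ H.obj X ⨿ Y) (h : Y ⟶ Z) (k : Z ⟶ W) :
    afterEq H (afterEq H e h) k = afterEq H e (h ≫ k) := by
  simp [afterEq, coprod.map_map]

lemma plusEq_afterEq (H : C ⥤ C) {X Z A B : C} (e : X ⟶ H.obj X ⨿ Z)
    (f : Z ⟶ H.obj Z ⨿ A) (d : A ⟶ B) :
    afterEq H (plusEq H e f) d = plusEq H e (afterEq H f d) := by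
  simp only [afterEq, plusEq, Category.assoc]
  congr 1
  ext <;> simp [coprod.map_map]

lemma plusEq_tail (H : C ⥤ C) {X Z A : C} (f : Z ⟶ H.obj Z ⨿ A) :
    coprod.map (𝟙 (H.obj X)) f ≫ (coprod.associator (H.obj X) (H.obj Z) A).inv ≫
        coprod.map (coprod.desc (H.map coprod.inl) (H.map coprod.inr)) (𝟙 A) =
      coprod.desc (H.map (coprod.inl : X ⟶ X ⨿ Z) ≫ coprod.inl)
        (f ≫ coprod.map (H.map coprod.inr) (𝟙 A)) := by
  ext <;> simp
  all_goals (repeat rw [coprod.inl_desc])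
  all_goals (repeat rw [coprod.inr_desc])
  congr 1
  ext
  · rw [coprod.inl_desc, coprod.inl_map]
  · rw [coprod.inr_desc, coprod.inr_map, Category.id_comp]

lemma inr_plusEq (H : C ⥤ C) {X Z A : C} (e : X ⟶ H.obj X ⨿ Z) (f : Z ⟶ H.obj Z ⨿ A) :
    coprod.inr ≫ plusEq H e f = f ≫ coprod.map (H.map coprod.inr) (𝟙 A) := by
  rw [plusEq, plusEq_tail, ← Category.assoc, coprod.inr_desc, coprod.inr_desc]

lemma inl_plusEq (H : C ⥤ C) {X Z A : C} (e : X ⟶ H.obj X ⨿ Z) (f : Z ⟶ H.obj Z ⨿ A) :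
    coprod.inl ≫ plusEq H e f =
      e ≫ coprod.desc (H.map coprod.inl ≫ coprod.inl)
        (f ≫ coprod.map (H.map coprod.inr) (𝟙 A)) := by
  rw [plusEq, plusEq_tail, ← Category.assoc, coprod.inl_desc]

section Construction
variable (H : C ⥤ C) {A Y : C} (α : H.obj A ⟶ A)

/-- the candidate solution -/
noncomputable def solB (EA : CompleteElgotStr H A α) (m : Y ⟶ A) {X : C}
    (e : X ⟶ H.obj X ⨿ (H.obj A ⨿ Y)) : X ⟶ H.obj A ⨿ Y :=
  e ≫ coprod.desc (H.map (EA.sol (afterEq H e (coprod.desc α m))) ≫ coprod.inl)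
    (𝟙 (H.obj A ⨿ Y))

lemma solB_desc (EA : CompleteElgotStr H A α) (m : Y ⟶ A) {X : C}
    (e : X ⟶ H.obj X ⨿ (H.obj A ⨿ Y)) :
    solB H α EA m e ≫ coprod.desc α m = EA.sol (afterEq H e (coprod.desc α m)) := by
  conv_rhs => rw [EA.isSol (afterEq H e (coprod.desc α m))]
  simp [solB, afterEq, coprod.map_map]
  rw [coprod.inl_desc]

lemma isSolB (EA : CompleteElgotStr H A α) (m : Y ⟶ A) {X : C}
    (e : X ⟶ H.obj X ⨿ (H.obj A ⨿ Y)) :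
    IsSolution H (H.map (coprod.desc α m) ≫ coprod.inl) e (solB H α EA m e) := by
  unfold IsSolution
  rw [coprod.map_desc, ← Category.assoc (H.map _), ← H.map_comp, solB_desc]
  simp [solB]

lemma functB (EA : CompleteElgotStr H A α) (m : Y ⟶ A) {X Z : C}
    (e : X ⟶ H.obj X ⨿ (H.obj A ⨿ Y)) (f : Z ⟶ H.obj Z ⨿ (H.obj A ⨿ Y)) (h : X ⟶ Z)
    (hyp : e ≫ coprod.map (H.map h) (𝟙 (H.obj A ⨿ Y)) = h ≫ f) :
    solB H α EA m e = h ≫ solB H α EA m f := by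
  have key : EA.sol (afterEq H e (coprod.desc α m))
      = h ≫ EA.sol (afterEq H f (coprod.desc α m)) := by
    apply EA.functorial
    simp only [afterEq, Category.assoc, coprod.map_map, Category.id_comp, Category.comp_id]
    rw [show coprod.map (H.map h) (coprod.desc α m)
          = coprod.map (H.map h) (𝟙 (H.obj A ⨿ Y)) ≫ coprod.map (𝟙 (H.obj Z)) (coprod.desc α m)
        by simp [coprod.map_map],
      ← Category.assoc, hyp, Category.assoc]
  simp only [solB, key, H.map_comp, Category.assoc]
  rw [show coprod.desc (H.map h ≫ H.map (EA.sol (afterEq H f (coprod.desc α m))) ≫ coprod.inl)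
        (𝟙 (H.obj A ⨿ Y))
      = coprod.map (H.map h) (𝟙 (H.obj A ⨿ Y)) ≫
          coprod.desc (H.map (EA.sol (afterEq H f (coprod.desc α m))) ≫ coprod.inl)
            (𝟙 (H.obj A ⨿ Y))
      by rw [coprod.map_desc]; simp,
    ← Category.assoc, hyp, Category.assoc]

lemma compB (EA : CompleteElgotStr H A α) (m : Y ⟶ A) {X Z : C}
    (e : X ⟶ H.obj X ⨿ Z) (f : Z ⟶ H.obj Z ⨿ (H.obj A ⨿ Y)) :
    solB H α EA m (afterEq H e (solB H α EA m f))
      = coprod.inl ≫ solB H α EA m (plusEq H e f) := by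
  have hsf : solB H α EA m f ≫ coprod.desc α m = EA.sol (afterEq H f (coprod.desc α m)) :=
    solB_desc H α EA m f
  set sf := solB H α EA m f with hs
  have hr : EA.sol (afterEq H f (coprod.desc α m))
      = coprod.inr ≫ EA.sol (afterEq H (plusEq H e f) (coprod.desc α m)) := by
    apply EA.functorial
    simp only [afterEq, Category.assoc, coprod.map_map, Category.id_comp, Category.comp_id]
    rw [← Category.assoc, inr_plusEq]
    simp [coprod.map_map]
  have hq : EA.sol (afterEq H (afterEq H e sf) (coprod.desc α m))
      = coprod.inl ≫ EA.sol (afterEq H (plusEq H e f) (coprod.desc α m)) := by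
    rw [afterEq_afterEq, hsf, plusEq_afterEq]
    exact EA.compositional e (afterEq H f (coprod.desc α m))
  have hsf2 : sf
      = f ≫ coprod.desc
          (H.map ((coprod.inr : Z ⟶ X ⨿ Z) ≫
            EA.sol (afterEq H (plusEq H e f) (coprod.desc α m))) ≫ coprod.inl)
          (𝟙 (H.obj A ⨿ Y)) := by
    rw [hs, solB, ← hr]
  rw [solB, hq, solB]
  conv_rhs => rw [← Category.assoc, inl_plusEq]
  rw [afterEq, Category.assoc, hsf2]
  simp [coprod.desc_comp, coprod.map_desc, H.map_comp, Category.assoc]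
  rw [coprod.inl_desc]
end Construction

noncomputable def EB (H : C ⥤ C) {A Y : C} (α : H.obj A ⟶ A)
    (EA : CompleteElgotStr H A α) (m : Y ⟶ A) :
    CompleteElgotStr H (H.obj A ⨿ Y) (H.map (coprod.desc α m) ≫ coprod.inl) where
  sol := fun {X} e => solB H α EA m e
  isSol := fun {X} e => isSolB H α EA m e
  functorial := fun {X Z} e f h hyp => functB H α EA m e f h hyp
  compositional := fun {X Z} e f => compB H α EA m e f


/-- For a complete Elgot algebra `(A, α, †)` and `m : Y ⟶ A`, the object
`HA + Y` carries a complete Elgot algebra structure with algebra map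
`inl ∘ H[α, m]` and solutions `e‡ = ([H(ē†), id_{HA}] + id_Y) ∘ e`
(where `ē = (id + [α, m]) ∘ e`), and `[α, m] : HA + Y ⟶ A` is a
solution-preserving morphism. -/
theorem elgot_on_coproduct (H : C ⥤ C) {A Y : C} (α : H.obj A ⟶ A)
    (EA : CompleteElgotStr H A α) (m : Y ⟶ A) :
    ∃ E : CompleteElgotStr H (H.obj A ⨿ Y) (H.map (coprod.desc α m) ≫ coprod.inl),
      (∀ (X : C) (e : X ⟶ H.obj X ⨿ (H.obj A ⨿ Y)),
        E.sol e =
          e ≫ coprod.desc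
            (H.map (EA.sol (afterEq H e (coprod.desc α m))) ≫ coprod.inl)
            (𝟙 (H.obj A ⨿ Y))) ∧
      SolPreserving E EA (coprod.desc α m) :=
  ⟨EB H α EA m, fun X e => rfl, fun X e => solB_desc H α EA m e⟩
end

section
/- Every join semilattice A is an Elgot algebra for the Set functor HX = X × X: defining α : RA → A by sending a rational binary tree to the join of the labels of its (finitely many) leaves, and assigning to each finitary flat equation morphism e : X → X × X + A the solution α ∘ ê, where ê : X → RA is the unique solution of e in the free iterative algebra RA of rational binary trees over A, yields a choice of solutions satisfying functoriality and compositionality. -/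
/-- The polynomial functor whose final-coalgebra construction gives all (finite
and infinite) binary trees with leaves labelled in `A`:
`X ↦ (X × X) ⊕ A`. -/
def treeP (A : Type) : PFunctor.{0} :=
  ⟨Unit ⊕ A, fun s => match s with | .inl _ => Bool | .inr _ => Empty⟩

/-- The type of all (finite and infinite) binary trees with leaves labelled
in `A`: the final coalgebra `TA` for `H(-) + A`, `H X = X × X`. -/
def BTree (A : Type) : Type := (treeP A).M

/-- The coalgebra structure corresponding to a flat equation morphism
`e : X → (X × X) ⊕ A`. -/
def treeStep {A X : Type} (e : X → (X × X) ⊕ A) (x : X) : (treeP A).Obj X :=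
  match e x with
  | .inl p => ⟨.inl (), fun (b : Bool) => if b then p.1 else p.2⟩
  | .inr a => ⟨.inr a, Empty.elim⟩

/-- `treeSol e : X → TA` is the unique solution `ê` of the flat equation
morphism `e` in the free completely iterative algebra `TA` of binary trees:
the unique homomorphism into the final coalgebra. -/
def treeSol {A X : Type} (e : X → (X × X) ⊕ A) : X → BTree A :=
  PFunctor.M.corec (treeStep e)

/-- `IsLeaf t a` : `a` is the label of some leaf of the binary tree `t`. -/
inductive IsLeaf {A : Type} : BTree A → A → Prop
  | leaf (t : BTree A) (a : A) : (PFunctor.M.dest t).fst = Sum.inr a → IsLeaf t a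
  | node (t : BTree A) (a : A) (b : (treeP A).B (PFunctor.M.dest t).fst) :
      IsLeaf ((PFunctor.M.dest t).snd b) a → IsLeaf t a

/-- The combined flat equation morphism `f ⊞ e : X ⊕ Y → ((X ⊕ Y) × (X ⊕ Y)) ⊕ A`
for `H X = X × X` on `Set`. -/
def prodPlus {X Y A : Type} (e : X → (X × X) ⊕ Y) (f : Y → (Y × Y) ⊕ A) :
    X ⊕ Y → ((X ⊕ Y) × (X ⊕ Y)) ⊕ A :=
  Sum.elim
    (fun x => Sum.elim (fun p => Sum.inl (Sum.inl p.1, Sum.inl p.2))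
      (fun y => Sum.map (Prod.map Sum.inr Sum.inr) id (f y)) (e x))
    (fun y => Sum.map (Prod.map Sum.inr Sum.inr) id (f y))

/-- An Elgot algebra structure on the algebra `(A, α)` for `H X = X × X` on
`Set`: chosen solutions of all finitary flat equation morphisms, satisfying
functoriality and compositionality. -/
structure ProdElgot (A : Type) (α : A × A → A) where
  sol : ∀ (X : Type) [Fintype X], (X → (X × X) ⊕ A) → (X → A)
  isSol : ∀ (X : Type) [Fintype X] (e : X → (X × X) ⊕ A) (x : X),
    sol X e x = Sum.elim (fun p => α (sol X e p.1, sol X e p.2)) id (e x)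
  functorial : ∀ (X Y : Type) [Fintype X] [Fintype Y]
    (e : X → (X × X) ⊕ A) (f : Y → (Y × Y) ⊕ A) (h : X → Y),
    (∀ x, Sum.map (Prod.map h h) id (e x) = f (h x)) →
      ∀ x, sol X e x = sol Y f (h x)
  compositional : ∀ (X Y : Type) [Fintype X] [Fintype Y]
    (e : X → (X × X) ⊕ Y) (f : Y → (Y × Y) ⊕ A) (x : X),
    sol X (fun x' => Sum.map id (sol Y f) (e x')) x =
      sol (X ⊕ Y) (prodPlus e f) (Sum.inl x)

inductive Reaches {X B : Type} (e : X → (X × X) ⊕ B) : X → B → Prop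
  | leaf (x : X) (b : B) : e x = Sum.inr b → Reaches e x b
  | left (x : X) (p q : X) (b : B) : e x = Sum.inl (p, q) → Reaches e p b → Reaches e x b
  | right (x : X) (p q : X) (b : B) : e x = Sum.inl (p, q) → Reaches e q b → Reaches e x b

theorem dest_treeSol_inl {A X : Type} {e : X → (X × X) ⊕ A} {x p q : X}
    (h : e x = Sum.inl (p, q)) :
    PFunctor.M.dest (treeSol e x) =
      ⟨Sum.inl (), fun b : Bool => treeSol e (if b then p else q)⟩ := by
  rw [treeSol, PFunctor.M.dest_corec]
  unfold treeStep; rw [h]; rfl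

theorem dest_treeSol_inr {A X : Type} {e : X → (X × X) ⊕ A} {x : X} {a : A}
    (h : e x = Sum.inr a) :
    PFunctor.M.dest (treeSol e x) = ⟨Sum.inr a, Empty.elim⟩ := by
  rw [treeSol, PFunctor.M.dest_corec]
  unfold treeStep; rw [h]
  show (⟨Sum.inr a, treeSol e ∘ Empty.elim⟩ : (treeP A).Obj _) = _
  exact congrArg (Sigma.mk (Sum.inr a)) (funext fun z => z.elim)

theorem isLeaf_node_of_dest {A : Type} (t : BTree A) (a : A)
    (d : (treeP A).Obj (BTree A)) (hd : PFunctor.M.dest t = d)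
    (b : (treeP A).B d.fst) (h : IsLeaf (d.snd b) a) : IsLeaf t a := by
  subst hd; exact IsLeaf.node t a b h

theorem isLeaf_iff {A X : Type} (e : X → (X × X) ⊕ A) (x : X) (a : A) :
    IsLeaf (treeSol e x) a ↔ Reaches e x a := by
  constructor
  · intro h
    have key : ∀ t, IsLeaf t a → ∀ x, t = treeSol e x → Reaches e x a := by
      clear h x
      intro t h
      induction h with
      | leaf t a ht =>
        intro x hx
        subst hx
        rcases he : e x with ⟨p, q⟩ | a'
        · rw [dest_treeSol_inl he] at ht; exact absurd ht (by simp)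
        · rw [dest_treeSol_inr he] at ht
          obtain rfl : a' = a := Sum.inr.inj ht
          exact Reaches.leaf x _ he
      | node t a b hl ih =>
        intro x hx
        subst hx
        rcases he : e x with ⟨p, q⟩ | a'
        · revert b hl ih
          rw [dest_treeSol_inl he]
          intro b hl ih
          rcases Bool.dichotomy b with hb | hb <;> subst hb
          · exact Reaches.right x p q a he (ih q rfl)
          · exact Reaches.left x p q a he (ih p rfl)
        · revert b hl ih
          rw [dest_treeSol_inr he]
          intro b _ _
          exact b.elim
    exact key _ h x rfl
  · intro h
    induction h with
    | leaf x b hb => exact IsLeaf.leaf _ _ (by rw [dest_treeSol_inr hb])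
    | left x p q b hx _ ih =>
      exact isLeaf_node_of_dest _ _ _ (dest_treeSol_inl hx) true ih
    | right x p q b hx _ ih =>
      exact isLeaf_node_of_dest _ _ _ (dest_treeSol_inl hx) false ih

theorem reaches_subset {X B : Type} (e : X → (X × X) ⊕ B) (x : X) :
    {b | Reaches e x b} ⊆ Sum.inr ⁻¹' Set.range e := by
  intro b hb
  induction hb with
  | leaf x b h => exact ⟨x, h⟩
  | left _ _ _ _ _ _ ih => exact ih
  | right _ _ _ _ _ _ ih => exact ih

theorem reaches_finite {X B : Type} [Fintype X] (e : X → (X × X) ⊕ B) (x : X) :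
    {b | Reaches e x b}.Finite :=
  Set.Finite.subset ((Set.finite_range e).preimage Sum.inr_injective.injOn)
    (reaches_subset e x)

noncomputable def rSol {A X : Type} [SemilatticeSup A] [OrderBot A] [Fintype X]
    (e : X → (X × X) ⊕ A) (x : X) : A :=
  (reaches_finite e x).toFinset.sup id

theorem rSol_isLUB {A X : Type} [SemilatticeSup A] [OrderBot A] [Fintype X]
    (e : X → (X × X) ⊕ A) (x : X) : IsLUB {a | Reaches e x a} (rSol e x) := by
  constructor
  · intro a ha
    exact Finset.le_sup (f := id) ((reaches_finite e x).mem_toFinset.mpr ha)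
  · intro b hb
    exact Finset.sup_le fun a ha => hb ((reaches_finite e x).mem_toFinset.mp ha)

-- leaf-set structure lemmas
theorem reaches_inr {X B : Type} {e : X → (X × X) ⊕ B} {x : X} {b : B}
    (h : e x = Sum.inr b) : {c | Reaches e x c} = {b} := by
  ext c
  simp only [Set.mem_setOf_eq, Set.mem_singleton_iff]
  constructor
  · intro hc
    cases hc with
    | leaf _ _ h' => rw [h] at h'; exact (Sum.inr.inj h').symm
    | left _ p q _ h' _ => rw [h] at h'; exact absurd h' (by simp)
    | right _ p q _ h' _ => rw [h] at h'; exact absurd h' (by simp)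
  · rintro rfl; exact Reaches.leaf x _ h

theorem reaches_inl {X B : Type} {e : X → (X × X) ⊕ B} {x p q : X}
    (h : e x = Sum.inl (p, q)) :
    {c | Reaches e x c} = {c | Reaches e p c} ∪ {c | Reaches e q c} := by
  ext c
  simp only [Set.mem_setOf_eq, Set.mem_union]
  constructor
  · intro hc
    cases hc with
    | leaf _ _ h' => rw [h] at h'; exact absurd h' (by simp)
    | left _ p' q' _ h' hr =>
      rw [h] at h'
      obtain ⟨h1, h2⟩ := Prod.mk.injEq .. ▸ Sum.inl.inj h'
      exact Or.inl (h1 ▸ hr)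
    | right _ p' q' _ h' hr =>
      rw [h] at h'
      obtain ⟨h1, h2⟩ := Prod.mk.injEq .. ▸ Sum.inl.inj h'
      exact Or.inr (h2 ▸ hr)
  · rintro (hc | hc)
    · exact Reaches.left x p q c h hc
    · exact Reaches.right x p q c h hc

theorem rSol_eq_of_isLUB {A X : Type} [SemilatticeSup A] [OrderBot A] [Fintype X]
    {e : X → (X × X) ⊕ A} {x : X} {a : A}
    (h : IsLUB {c | Reaches e x c} a) : rSol e x = a :=
  (rSol_isLUB e x).unique h

theorem rSol_isSol {A X : Type} [SemilatticeSup A] [OrderBot A] [Fintype X]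
    (e : X → (X × X) ⊕ A) (x : X) :
    rSol e x = Sum.elim (fun p => rSol e p.1 ⊔ rSol e p.2) id (e x) := by
  rcases he : e x with ⟨p, q⟩ | a
  · refine rSol_eq_of_isLUB ?_
    rw [reaches_inl he]
    exact (rSol_isLUB e p).union (rSol_isLUB e q)
  · refine rSol_eq_of_isLUB ?_
    rw [reaches_inr he]
    exact isLUB_singleton

-- functoriality
theorem reaches_map {X Y B : Type} (e : X → (X × X) ⊕ B) (f : Y → (Y × Y) ⊕ B)
    (h : X → Y) (hc : ∀ x, Sum.map (Prod.map h h) id (e x) = f (h x)) (x : X) (b : B) :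
    Reaches e x b ↔ Reaches f (h x) b := by
  constructor
  · intro hr
    induction hr with
    | leaf x b hb =>
      refine Reaches.leaf _ b ?_
      rw [← hc x, hb]; rfl
    | left x p q b hx _ ih =>
      refine Reaches.left _ (h p) (h q) b ?_ ih
      rw [← hc x, hx]; rfl
    | right x p q b hx _ ih =>
      refine Reaches.right _ (h p) (h q) b ?_ ih
      rw [← hc x, hx]; rfl
  · intro hr
    have key : ∀ y b, Reaches f y b → ∀ x, h x = y → Reaches e x b := by
      intro y b hr
      induction hr with
      | leaf y b hb =>
        intro x hx
        subst hx
        rcases he : e x with ⟨p, q⟩ | b'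
        · have := hc x; rw [he, hb] at this; exact absurd this (by simp)
        · have := hc x; rw [he, hb] at this
          simp only [Sum.map_inr, id_eq] at this
          obtain rfl := Sum.inr.inj this
          exact Reaches.leaf x _ he
      | left y p' q' b hy _ ih =>
        intro x hx
        subst hx
        rcases he : e x with ⟨p, q⟩ | b'
        · have := hc x; rw [he, hy] at this
          simp only [Sum.map_inl, Prod.map_apply] at this
          obtain ⟨h1, h2⟩ := Prod.mk.injEq .. ▸ Sum.inl.inj this
          exact Reaches.left x p q b he (ih p h1)
        · have := hc x; rw [he, hy] at this; exact absurd this (by simp)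
      | right y p' q' b hy _ ih =>
        intro x hx
        subst hx
        rcases he : e x with ⟨p, q⟩ | b'
        · have := hc x; rw [he, hy] at this
          simp only [Sum.map_inl, Prod.map_apply] at this
          obtain ⟨h1, h2⟩ := Prod.mk.injEq .. ▸ Sum.inl.inj this
          exact Reaches.right x p q b he (ih q h2)
        · have := hc x; rw [he, hy] at this; exact absurd this (by simp)
    exact key _ _ hr x rfl

-- compositionality: lhs leaf sets
theorem reaches_subst {X Y A : Type} (e : X → (X × X) ⊕ Y) (g : Y → A) (x : X) (a : A) :
    Reaches (fun x' => Sum.map id g (e x')) x a ↔ ∃ y, Reaches e x y ∧ g y = a := by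
  constructor
  · intro hr
    induction hr with
    | leaf x a ha =>
      have ha' : Sum.map id g (e x) = Sum.inr a := ha
      rcases he : e x with ⟨p, q⟩ | y
      · rw [he] at ha'; exact absurd ha' (by simp)
      · rw [he] at ha'
        simp only [Sum.map_inr] at ha'
        exact ⟨y, Reaches.leaf x y he, Sum.inr.inj ha'⟩
    | left x p q a hx _ ih =>
      have hx' : Sum.map id g (e x) = Sum.inl (p, q) := hx
      rcases he : e x with ⟨p', q'⟩ | y
      · rw [he] at hx'
        simp only [Sum.map_inl, Prod.map_apply, id_eq] at hx'
        obtain ⟨h1, h2⟩ := Prod.mk.injEq .. ▸ Sum.inl.inj hx'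
        obtain ⟨y, hy, hgy⟩ := ih
        exact ⟨y, Reaches.left x p' q' y he (h1 ▸ hy), hgy⟩
      · rw [he] at hx'; exact absurd hx' (by simp)
    | right x p q a hx _ ih =>
      have hx' : Sum.map id g (e x) = Sum.inl (p, q) := hx
      rcases he : e x with ⟨p', q'⟩ | y
      · rw [he] at hx'
        simp only [Sum.map_inl, Prod.map_apply, id_eq] at hx'
        obtain ⟨h1, h2⟩ := Prod.mk.injEq .. ▸ Sum.inl.inj hx'
        obtain ⟨y, hy, hgy⟩ := ih
        exact ⟨y, Reaches.right x p' q' y he (h2 ▸ hy), hgy⟩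
      · rw [he] at hx'; exact absurd hx' (by simp)
  · rintro ⟨y, hy, rfl⟩
    induction hy with
    | leaf x y hy => exact Reaches.leaf x (g y) (by simp [hy])
    | left x p q y hx _ ih => exact Reaches.left x p q (g y) (by simp [hx]) ih
    | right x p q y hx _ ih => exact Reaches.right x p q (g y) (by simp [hx]) ih

theorem reaches_prodPlus_inr {X Y A : Type} (e : X → (X × X) ⊕ Y)
    (f : Y → (Y × Y) ⊕ A) (y : Y) (a : A) :
    Reaches (prodPlus e f) (Sum.inr y) a ↔ Reaches f y a := by
  constructor
  · intro hr
    have key : ∀ z a, Reaches (prodPlus e f) z a → ∀ y, z = Sum.inr y → Reaches f y a := by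
      intro z a hr
      induction hr with
      | leaf z a hz =>
        rintro y rfl
        rcases hf : f y with ⟨p, q⟩ | a'
        · simp only [prodPlus, Sum.elim_inr, hf] at hz; exact absurd hz (by simp)
        · simp only [prodPlus, Sum.elim_inr, hf, Sum.map_inr, id_eq] at hz
          obtain rfl := Sum.inr.inj hz
          exact Reaches.leaf y _ hf
      | left z p q a hz _ ih =>
        rintro y rfl
        rcases hf : f y with ⟨p', q'⟩ | a'
        · simp only [prodPlus, Sum.elim_inr, hf, Sum.map_inl, Prod.map_apply] at hz
          obtain ⟨h1, h2⟩ := Prod.mk.injEq .. ▸ Sum.inl.inj hz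
          exact Reaches.left y p' q' a hf (ih p' h1.symm)
        · simp only [prodPlus, Sum.elim_inr, hf] at hz; exact absurd hz (by simp)
      | right z p q a hz _ ih =>
        rintro y rfl
        rcases hf : f y with ⟨p', q'⟩ | a'
        · simp only [prodPlus, Sum.elim_inr, hf, Sum.map_inl, Prod.map_apply] at hz
          obtain ⟨h1, h2⟩ := Prod.mk.injEq .. ▸ Sum.inl.inj hz
          exact Reaches.right y p' q' a hf (ih q' h2.symm)
        · simp only [prodPlus, Sum.elim_inr, hf] at hz; exact absurd hz (by simp)
    exact key _ _ hr y rfl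
  · intro hr
    induction hr with
    | leaf y a hy => exact Reaches.leaf _ a (by simp [prodPlus, hy])
    | left y p q a hy _ ih =>
      exact Reaches.left _ (Sum.inr p) (Sum.inr q) a (by simp [prodPlus, hy]) ih
    | right y p q a hy _ ih =>
      exact Reaches.right _ (Sum.inr p) (Sum.inr q) a (by simp [prodPlus, hy]) ih

theorem reaches_prodPlus_inl {X Y A : Type} (e : X → (X × X) ⊕ Y)
    (f : Y → (Y × Y) ⊕ A) (x : X) (a : A) :
    Reaches (prodPlus e f) (Sum.inl x) a ↔ ∃ y, Reaches e x y ∧ Reaches f y a := by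
  constructor
  · intro hr
    have key : ∀ z a, Reaches (prodPlus e f) z a → ∀ x, z = Sum.inl x →
        ∃ y, Reaches e x y ∧ Reaches f y a := by
      intro z a hr
      induction hr with
      | leaf z a hz =>
        rintro x rfl
        rcases he : e x with ⟨p, q⟩ | y
        · simp only [prodPlus, Sum.elim_inl, he] at hz; exact absurd hz (by simp)
        · simp only [prodPlus, Sum.elim_inl, he, Sum.elim_inr] at hz
          rcases hf : f y with ⟨p', q'⟩ | a'
          · rw [hf] at hz; exact absurd hz (by simp)
          · rw [hf] at hz
            simp only [Sum.map_inr, id_eq] at hz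
            obtain rfl := Sum.inr.inj hz
            exact ⟨y, Reaches.leaf x y he, Reaches.leaf y _ hf⟩
      | left z p q a hz hp ih =>
        rintro x rfl
        rcases he : e x with ⟨p', q'⟩ | y
        · simp only [prodPlus, Sum.elim_inl, he] at hz
          obtain ⟨h1, h2⟩ := Prod.mk.injEq .. ▸ Sum.inl.inj hz
          obtain ⟨y, hy, hfy⟩ := ih p' h1.symm
          exact ⟨y, Reaches.left x p' q' y he hy, hfy⟩
        · simp only [prodPlus, Sum.elim_inl, he, Sum.elim_inr] at hz
          rcases hf : f y with ⟨p', q'⟩ | a'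
          · rw [hf] at hz
            simp only [Sum.map_inl, Prod.map_apply] at hz
            obtain ⟨h1, h2⟩ := Prod.mk.injEq .. ▸ Sum.inl.inj hz
            have : Reaches f p' a :=
              (reaches_prodPlus_inr e f p' a).mp (h1.symm ▸ hp)
            exact ⟨y, Reaches.leaf x y he, Reaches.left y p' q' a hf this⟩
          · rw [hf] at hz; exact absurd hz (by simp)
      | right z p q a hz hq ih =>
        rintro x rfl
        rcases he : e x with ⟨p', q'⟩ | y
        · simp only [prodPlus, Sum.elim_inl, he] at hz
          obtain ⟨h1, h2⟩ := Prod.mk.injEq .. ▸ Sum.inl.inj hz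
          obtain ⟨y, hy, hfy⟩ := ih q' h2.symm
          exact ⟨y, Reaches.right x p' q' y he hy, hfy⟩
        · simp only [prodPlus, Sum.elim_inl, he, Sum.elim_inr] at hz
          rcases hf : f y with ⟨p', q'⟩ | a'
          · rw [hf] at hz
            simp only [Sum.map_inl, Prod.map_apply] at hz
            obtain ⟨h1, h2⟩ := Prod.mk.injEq .. ▸ Sum.inl.inj hz
            have : Reaches f q' a :=
              (reaches_prodPlus_inr e f q' a).mp (h2.symm ▸ hq)
            exact ⟨y, Reaches.leaf x y he, Reaches.right y p' q' a hf this⟩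
          · rw [hf] at hz; exact absurd hz (by simp)
    exact key _ _ hr x rfl
  · rintro ⟨y, hy, hfy⟩
    induction hy with
    | leaf x y hy =>
      cases hfy with
      | leaf _ _ hf => exact Reaches.leaf _ a (by simp [prodPlus, hy, hf])
      | left _ p q _ hf hr =>
        exact Reaches.left _ (Sum.inr p) (Sum.inr q) a (by simp [prodPlus, hy, hf])
          ((reaches_prodPlus_inr e f p a).mpr hr)
      | right _ p q _ hf hr =>
        exact Reaches.right _ (Sum.inr p) (Sum.inr q) a (by simp [prodPlus, hy, hf])
          ((reaches_prodPlus_inr e f q a).mpr hr)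
    | left x p q y hx _ ih =>
      exact Reaches.left _ (Sum.inl p) (Sum.inl q) a (by simp [prodPlus, hx]) (ih hfy)
    | right x p q y hx _ ih =>
      exact Reaches.right _ (Sum.inl p) (Sum.inl q) a (by simp [prodPlus, hx]) (ih hfy)


/-- Every join semilattice `A` (with a least element, so that the empty join
exists) is an Elgot algebra for `H X = X × X` on `Set`: there is a choice of
solutions of finitary flat equation morphisms, satisfying functoriality and
compositionality, where the solution at `x` is the join of the labels of the
(finitely many) leaves of the rational binary tree `ê x`, `ê` being the unique
solution of `e` in the free iterative algebra of rational binary trees over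
`A`.  (Here `ê x = treeSol e x` is the tree unfolding of the finitary flat
equation morphism `e`, which is a rational tree, and "the join of the leaf
labels" is expressed by `IsLUB`.) -/
theorem semilattice_elgot {A : Type} [SemilatticeSup A] [OrderBot A] :
    ∃ E : ProdElgot A (fun p => p.1 ⊔ p.2),
      ∀ (X : Type) [Fintype X] (e : X → (X × X) ⊕ A) (x : X),
        IsLUB {a | IsLeaf (treeSol e x) a} (E.sol X e x) := by
  refine ⟨⟨fun X _ e => rSol e, ?_, ?_, ?_⟩, ?_⟩
  · intro X _ e x
    exact rSol_isSol e x
  · intro X Y _ _ e f h hc x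
    have hset : {a | Reaches e x a} = {a | Reaches f (h x) a} :=
      Set.ext fun a => reaches_map e f h hc x a
    exact rSol_eq_of_isLUB (hset ▸ rSol_isLUB f (h x))
  · intro X Y _ _ e f x
    set e' : X → (X × X) ⊕ A := fun x' => Sum.map id (rSol f) (e x') with he'
    refine (rSol_eq_of_isLUB ?_).symm
    constructor
    · intro a ha
      obtain ⟨y, hy, hfy⟩ := (reaches_prodPlus_inl e f x a).mp ha
      have h1 : a ≤ rSol f y := (rSol_isLUB f y).1 hfy
      have h2 : Reaches e' x (rSol f y) :=
        (reaches_subst e (rSol f) x (rSol f y)).mpr ⟨y, hy, rfl⟩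
      exact le_trans h1 ((rSol_isLUB e' x).1 h2)
    · intro b hb
      refine (rSol_isLUB e' x).2 ?_
      intro a ha
      obtain ⟨y, hy, rfl⟩ := (reaches_subst e (rSol f) x a).mp ha
      refine (rSol_isLUB f y).2 ?_
      intro c hc
      exact hb ((reaches_prodPlus_inl e f x c).mpr ⟨y, hy, hc⟩)
  · intro X _ e x
    have hset : {a | IsLeaf (treeSol e x) a} = {a | Reaches e x a} :=
      Set.ext fun a => isLeaf_iff e x a
    rw [hset]
    exact rSol_isLUB e x
end
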